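/- arXiv:0805.3484 — 7 statements merged into one kernel-verified Lean document; each statement's English description precedes it below -/
import Mathlib

section
/- Let (A,B,C,E) be the CCF of a minimal encoder G of an (n,k,δ) convolutional code with r positive Forney indices, and set Δ = {(X,Y) ∈ F^δ × F^δ : Y = XA + uB for some u ∈ F^k}. Then the orthogonal of Δ in F^δ × F^δ ≅ F^{2δ} with respect to the standard bilinear form is Δ^⊥ = {(X A^T, −X A^T A) : X ∈ F^δ}. -/
open Polynomial Matrix
open scoped Classical

noncomputable section

namespace ConvCode

variable (F : Type) [Field F] [Fintype F]

/-- Hamming weight of a vector. -/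
def wt {n : ℕ} (a : Fin n → F) : ℕ := (Finset.univ.filter fun j => a j ≠ 0).card

/-- Weight enumerator of a set of vectors in `F^n`, as a polynomial in `ℂ[W]`. -/
def weSet {n : ℕ} (S : Set (Fin n → F)) : Polynomial ℂ :=
  ∑ a ∈ (Set.toFinite S).toFinset, (Polynomial.X : Polynomial ℂ) ^ wt F a

/-- The `i`-th row degree of a polynomial matrix. -/
def rowDeg {k n : ℕ} (G : Matrix (Fin k) (Fin n) (Polynomial F)) (i : Fin k) : ℕ :=
  Finset.univ.sup fun j => (G i j).natDegree

/-- `G` is basic: it has a polynomial right inverse. -/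
def IsBasic {k n : ℕ} (G : Matrix (Fin k) (Fin n) (Polynomial F)) : Prop :=
  ∃ H : Matrix (Fin n) (Fin k) (Polynomial F), G * H = 1

/-- The degree of the code: maximal degree of the `k × k` minors of `G`. -/
def codeDeg {k n : ℕ} (G : Matrix (Fin k) (Fin n) (Polynomial F)) : ℕ :=
  Finset.univ.sup fun f : Fin k ↪ Fin n => ((G.submatrix id f).det).natDegree

/-- A minimal (basic) encoder: the sum of the row degrees equals the degree of the code. -/
def IsMinimalEncoder {k n : ℕ} (G : Matrix (Fin k) (Fin n) (Polynomial F)) : Prop :=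
  IsBasic F G ∧ ∑ i, rowDeg F G i = codeDeg F G

/-- The convolutional code generated by the encoder `G`. -/
def code {k n : ℕ} (G : Matrix (Fin k) (Fin n) (Polynomial F)) : Set (Fin n → Polynomial F) :=
  Set.range fun u : Fin k → Polynomial F => u ᵥ* G

/-- The (module-theoretic) dual of a convolutional code. -/
def dualCode {n : ℕ} (𝓒 : Set (Fin n → Polynomial F)) : Set (Fin n → Polynomial F) :=
  {w | ∀ v ∈ 𝓒, w ⬝ᵥ v = 0}

/-- The sequence-space pairing `⟨⟨v,w⟩⟩ = ∑_t v_t w_tᵀ`. -/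
def seqPair {n : ℕ} (v w : Fin n → Polynomial F) : F :=
  ∑ j, ∑ t ∈ Finset.range ((v j).natDegree + 1), (v j).coeff t * (w j).coeff t

/-- The sequence space dual of a convolutional code. -/
def seqDual {n : ℕ} (𝓒 : Set (Fin n → Polynomial F)) : Set (Fin n → Polynomial F) :=
  {w | ∀ v ∈ 𝓒, ∀ l : ℕ, seqPair F v (fun j => Polynomial.X ^ l * w j) = 0}

/-- Index set of the state space of the controller canonical form:
a state index is a pair `(i, ν)` with `i` a row index and `ν < δ_i`. -/
abbrev StateIdx (k : ℕ) (d : Fin k → ℕ) : Type := (i : Fin k) × Fin (d i)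

/-- The state-transition matrix `A` of the controller canonical form. -/
def ccfA {k : ℕ} (d : Fin k → ℕ) : Matrix (StateIdx k d) (StateIdx k d) F :=
  Matrix.of fun s t => if s.1 = t.1 ∧ (s.2 : ℕ) + 1 = (t.2 : ℕ) then 1 else 0

/-- The input-to-state matrix `B` of the controller canonical form. -/
def ccfB {k : ℕ} (d : Fin k → ℕ) : Matrix (Fin k) (StateIdx k d) F :=
  Matrix.of fun i t => if t.1 = i ∧ (t.2 : ℕ) = 0 then 1 else 0

/-- The state-to-output matrix `C` of the controller canonical form. -/
def ccfC {k n : ℕ} (d : Fin k → ℕ) (G : Matrix (Fin k) (Fin n) (Polynomial F)) :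
    Matrix (StateIdx k d) (Fin n) F :=
  Matrix.of fun s j => (G s.1 j).coeff ((s.2 : ℕ) + 1)

/-- The matrix `E = G(0)` of the controller canonical form. -/
def ccfE {k n : ℕ} (G : Matrix (Fin k) (Fin n) (Polynomial F)) : Matrix (Fin k) (Fin n) F :=
  Matrix.of fun i j => (G i j).coeff 0

/-- The state index set of the controller canonical form of `G`. -/
abbrev States {k n : ℕ} (G : Matrix (Fin k) (Fin n) (Polynomial F)) : Type :=
  StateIdx k (rowDeg F G)

def matA {k n : ℕ} (G : Matrix (Fin k) (Fin n) (Polynomial F)) :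
    Matrix (States F G) (States F G) F := ccfA F (rowDeg F G)

def matB {k n : ℕ} (G : Matrix (Fin k) (Fin n) (Polynomial F)) :
    Matrix (Fin k) (States F G) F := ccfB F (rowDeg F G)

def matC {k n : ℕ} (G : Matrix (Fin k) (Fin n) (Polynomial F)) :
    Matrix (States F G) (Fin n) F := ccfC F (rowDeg F G) G

def matE {k n : ℕ} (G : Matrix (Fin k) (Fin n) (Polynomial F)) :
    Matrix (Fin k) (Fin n) F := ccfE F G

/-- The weight adjacency matrix of a state space realization `(A,B,C,E)`. -/
def WAM {σ : Type} [Fintype σ] {k n : ℕ} (A : Matrix σ σ F) (B : Matrix (Fin k) σ F)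
    (C : Matrix σ (Fin n) F) (E : Matrix (Fin k) (Fin n) F) :
    Matrix (σ → F) (σ → F) (Polynomial ℂ) :=
  Matrix.of fun X Y =>
    weSet F {v | ∃ u : Fin k → F, Y = X ᵥ* A + u ᵥ* B ∧ v = X ᵥ* C + u ᵥ* E}

/-- The weight adjacency matrix of an encoder `G` (via its controller canonical form). -/
def wam {k n : ℕ} (G : Matrix (Fin k) (Fin n) (Polynomial F)) :
    Matrix (States F G → F) (States F G → F) (Polynomial ℂ) :=
  WAM F (matA F G) (matB F G) (matC F G) (matE F G)

/-- The block code `C_const = 𝓒 ∩ F^n` of constant codewords. -/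
def constSet {k n : ℕ} (G : Matrix (Fin k) (Fin n) (Polynomial F)) : Set (Fin n → F) :=
  {w | (fun j => Polynomial.C (w j)) ∈ code F G}

/-- The block code `C_coeff` of coefficient vectors of codewords. -/
def coeffSet {k n : ℕ} (G : Matrix (Fin k) (Fin n) (Polynomial F)) : Set (Fin n → F) :=
  {w | ∃ v ∈ code F G, ∃ t : ℕ, ∀ j, (v j).coeff t = w j}

/-- The dual of a block code. -/
def blockDual {n : ℕ} (S : Set (Fin n → F)) : Set (Fin n → F) :=
  {w | ∀ v ∈ S, w ⬝ᵥ v = 0}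

/-- `Δ`: the set of state pairs `(X,Y)` admitting a transition `Y = XA + uB`. -/
def Delta {k n : ℕ} (G : Matrix (Fin k) (Fin n) (Polynomial F)) :
    Set ((States F G → F) × (States F G → F)) :=
  {p | ∃ u : Fin k → F, p.2 = p.1 ᵥ* matA F G + u ᵥ* matB F G}

/-- `Δ⁻ = {(0,Y) : Y ∈ im A}`. -/
def DeltaMinus {k n : ℕ} (G : Matrix (Fin k) (Fin n) (Polynomial F)) :
    Set ((States F G → F) × (States F G → F)) :=
  {p | p.1 = 0 ∧ ∃ X : States F G → F, p.2 = X ᵥ* matA F G}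

/-- `Ω = {(X,Y) ∈ Δ : XC + Y Bᵀ E ∈ C_const}`. -/
def Omega {k n : ℕ} (G : Matrix (Fin k) (Fin n) (Polynomial F)) :
    Set ((States F G → F) × (States F G → F)) :=
  {p | p ∈ Delta F G ∧
    p.1 ᵥ* matC F G + (p.2 ᵥ* (matB F G)ᵀ) ᵥ* matE F G ∈ constSet F G}

/-- Orthogonal of a set of state pairs with respect to the standard bilinear form on `F^{2δ}`. -/
def pairPerp {σ : Type} [Fintype σ] (S : Set ((σ → F) × (σ → F))) :
    Set ((σ → F) × (σ → F)) :=
  {p | ∀ s ∈ S, p.1 ⬝ᵥ s.1 + p.2 ⬝ᵥ s.2 = 0}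

/-- `S_0 = Bᵀ E` and `S_i = Bᵀ B A^{i-1} C` for `i ≥ 1`. -/
def Smat {k n : ℕ} (d : Fin k → ℕ) (G : Matrix (Fin k) (Fin n) (Polynomial F)) :
    ℕ → Matrix (StateIdx k d) (Fin n) F
  | 0 => (ccfB F d)ᵀ * ccfE F G
  | (i + 1) => (ccfB F d)ᵀ * ccfB F d * ccfA F d ^ i * ccfC F d G

def Sm {k n : ℕ} (G : Matrix (Fin k) (Fin n) (Polynomial F)) :
    ℕ → Matrix (States F G) (Fin n) F := Smat F (rowDeg F G) G

/-- The matrix `N = ∑_{m≥2} ∑_{i=1}^{m-1} ∑_{j=0}^{i-1} (Âᵀ)^{i-1} Ŝ_j S_{m-j}ᵀ A^{m-(i+1)}`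
(all summands with `m ≥ δ + δ̂` vanish, so the sum is truncated there). -/
def Nm {k kb n : ℕ} (G : Matrix (Fin k) (Fin n) (Polynomial F))
    (Gh : Matrix (Fin kb) (Fin n) (Polynomial F)) :
    Matrix (States F Gh) (States F G) F :=
  ∑ m ∈ Finset.Icc 2 (Fintype.card (States F G) + Fintype.card (States F Gh)),
    ∑ i ∈ Finset.Icc 1 (m - 1), ∑ j ∈ Finset.range i,
      (matA F Gh)ᵀ ^ (i - 1) * Sm F Gh j * (Sm F G (m - j))ᵀ * matA F G ^ (m - (i + 1))

/-- The reciprocal matrix `G' = diag(D^{δ_1},…,D^{δ_k}) · G(D⁻¹)`. -/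
def recip {k n : ℕ} (G : Matrix (Fin k) (Fin n) (Polynomial F)) :
    Matrix (Fin k) (Fin n) (Polynomial F) :=
  Matrix.of fun i j => (G i j).reflect (rowDeg F G i)

/-- The block diagonal matrix `R` whose blocks are the anti-identity matrices. -/
def Rmat {k : ℕ} (d : Fin k → ℕ) : Matrix (StateIdx k d) (StateIdx k d) F :=
  Matrix.of fun s t => if s.1 = t.1 ∧ (s.2 : ℕ) + (t.2 : ℕ) + 1 = d s.1 then 1 else 0

/-- The MacWilliams matrix `𝓗 = q^{-δ/2} (ζ^{τ(X Yᵀ)})_{X,Y}`. -/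
def macH (σ : Type) [Fintype σ] (p : ℕ) [Algebra (ZMod p) F] (ζ : ℂ) :
    Matrix (σ → F) (σ → F) ℂ :=
  Matrix.of fun X Y =>
    (((Real.sqrt (Fintype.card F) : ℝ) : ℂ))⁻¹ ^ Fintype.card σ *
      ζ ^ (Algebra.trace (ZMod p) F (X ⬝ᵥ Y)).val

/-- The MacWilliams transform `H(f)(W) = (1+(q-1)W)^n f((1-W)/(1+(q-1)W))`
on polynomials of degree at most `n`. -/
def macWT (q n : ℕ) (f : Polynomial ℂ) : Polynomial ℂ :=
  ∑ j ∈ Finset.range (n + 1),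
    Polynomial.C (f.coeff j) * (1 - Polynomial.X) ^ j *
      (1 + Polynomial.C ((q : ℂ) - 1) * Polynomial.X) ^ (n - j)

end ConvCode

namespace CCAux

open ConvCode

variable {F : Type} [Field F] {k : ℕ} {d : Fin k → ℕ}

/-- shift up: `(shUp q) (i,ν) = q (i,ν+1)` (or 0). -/
def shUp (d : Fin k → ℕ) (q : StateIdx k d → F) : StateIdx k d → F :=
  fun s => if h : (s.2 : ℕ) + 1 < d s.1 then q ⟨s.1, ⟨(s.2 : ℕ) + 1, h⟩⟩ else 0

/-- shift down: `(shDown p) (i,ν) = p (i,ν-1)` (or 0). -/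
def shDown (d : Fin k → ℕ) (p : StateIdx k d → F) : StateIdx k d → F :=
  fun t => if 0 < (t.2 : ℕ) then
      p ⟨t.1, ⟨(t.2 : ℕ) - 1, lt_of_le_of_lt (Nat.pred_le _) t.2.2⟩⟩ else 0

lemma mulVec_ccfA (q : StateIdx k d → F) : ccfA F d *ᵥ q = shUp d q := by
  funext s
  simp only [Matrix.mulVec, dotProduct, ccfA, Matrix.of_apply, ite_mul, one_mul, zero_mul]
  by_cases h : (s.2 : ℕ) + 1 < d s.1
  · rw [Finset.sum_eq_single (⟨s.1, ⟨(s.2 : ℕ) + 1, h⟩⟩ : StateIdx k d)]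
    · simp [shUp, h]
    · rintro ⟨i, ν⟩ - hne
      rw [if_neg]
      rintro ⟨h1, h2⟩
      exact hne (by subst h1; exact congrArg (Sigma.mk s.1) (Fin.ext h2.symm))
    · intro hmem; exact absurd (Finset.mem_univ _) hmem
  · simp only [shUp, dif_neg h]
    apply Finset.sum_eq_zero
    rintro ⟨i, ν⟩ -
    rw [if_neg]
    rintro ⟨h1, h2⟩
    exact h (by rw [h2, h1]; exact ν.2)

lemma vecMul_ccfA (p : StateIdx k d → F) : p ᵥ* ccfA F d = shDown d p := by
  funext t
  simp only [Matrix.vecMul, dotProduct, ccfA, Matrix.of_apply, mul_ite, mul_one, mul_zero]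
  by_cases h : 0 < (t.2 : ℕ)
  · rw [Finset.sum_eq_single
        (⟨t.1, ⟨(t.2 : ℕ) - 1, lt_of_le_of_lt (Nat.pred_le _) t.2.2⟩⟩ : StateIdx k d)]
    · rw [if_pos ⟨rfl, show ((t.2 : ℕ) - 1) + 1 = (t.2 : ℕ) by omega⟩, shDown, if_pos h]
    · rintro ⟨i, ν⟩ - hne
      rw [if_neg]
      rintro ⟨h1, h2⟩
      refine hne ?_
      subst h1
      have h2' : (ν : ℕ) + 1 = (t.2 : ℕ) := h2
      exact congrArg (Sigma.mk t.1) (Fin.ext (show (ν : ℕ) = (t.2 : ℕ) - 1 by omega))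
    · intro hmem; exact absurd (Finset.mem_univ _) hmem
  · simp only [shDown, if_neg h]
    apply Finset.sum_eq_zero
    rintro ⟨i, ν⟩ -
    rw [if_neg]
    rintro ⟨h1, h2⟩
    omega
  
lemma mulVec_ccfB (q : StateIdx k d → F) (i : Fin k) :
    (ccfB F d *ᵥ q) i = if h : 0 < d i then q ⟨i, ⟨0, h⟩⟩ else 0 := by
  simp only [Matrix.mulVec, dotProduct, ccfB, Matrix.of_apply, ite_mul, one_mul, zero_mul]
  by_cases h : 0 < d i
  · rw [Finset.sum_eq_single (⟨i, ⟨0, h⟩⟩ : StateIdx k d)]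
    · simp [h]
    · rintro ⟨j, ν⟩ - hne
      rw [if_neg]
      rintro ⟨h1, h2⟩
      exact hne (by subst h1; exact congrArg (Sigma.mk j) (Fin.ext h2))
    · intro hmem; exact absurd (Finset.mem_univ _) hmem
  · rw [dif_neg h]
    apply Finset.sum_eq_zero
    rintro ⟨j, ν⟩ -
    rw [if_neg]
    rintro ⟨h1, h2⟩
    exact h (h1 ▸ ν.pos)

lemma shUp_neg (q : StateIdx k d → F) : shUp d (-q) = -shUp d q := by
  funext s
  by_cases h : (s.2 : ℕ) + 1 < d s.1 <;> simp [shUp, h]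

lemma shDown_neg (p : StateIdx k d → F) : shDown d (-p) = -shDown d p := by
  funext t
  by_cases h : 0 < (t.2 : ℕ) <;> simp [shDown, h]

lemma shUp_shDown_shUp (X : StateIdx k d → F) :
    shUp d (shDown d (shUp d X)) = shUp d X := by
  funext s
  by_cases h : (s.2 : ℕ) + 1 < d s.1 <;>
    simp [shUp, shDown, h]

lemma shDown_shUp (q : StateIdx k d → F)
    (h0 : ∀ (i : Fin k) (h : 0 < d i), q ⟨i, ⟨0, h⟩⟩ = 0) :
    shDown d (shUp d q) = q := by
  funext t
  by_cases h : 0 < (t.2 : ℕ)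
  · simp only [shDown, shUp, if_pos h]
    rw [dif_pos (show ((t.2 : ℕ) - 1) + 1 < d t.1 by omega)]
    refine congrArg q ?_
    refine (congrArg (Sigma.mk t.1) (Fin.ext ?_)).trans (Sigma.eta t)
    show ((t.2 : ℕ) - 1) + 1 = (t.2 : ℕ)
    omega
  · simp only [shDown, shUp, if_neg h]
    have ht : t = ⟨t.1, ⟨0, t.2.2.trans_le' (by omega)⟩⟩ := by
      refine ((congrArg (Sigma.mk t.1) (Fin.ext ?_)).trans (Sigma.eta t)).symm
      show (0 : ℕ) = (t.2 : ℕ)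
      omega
    rw [ht, h0]

end CCAux

/-- Proposition 4.4(b): `Δ^⊥ = {(X Aᵀ, −X Aᵀ A) : X ∈ F^δ}`. -/
theorem statement4 {F : Type} [Field F] [Fintype F]
    (k n : ℕ) (G : Matrix (Fin k) (Fin n) (Polynomial F))
    (hG : ConvCode.IsMinimalEncoder F G) :
    ConvCode.pairPerp F (ConvCode.Delta F G) =
      {pq | ∃ X : ConvCode.States F G → F,
        pq = (X ᵥ* (ConvCode.matA F G)ᵀ,
              -((X ᵥ* (ConvCode.matA F G)ᵀ) ᵥ* ConvCode.matA F G))} := by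
  classical
  have hAmat : ConvCode.matA F G = ConvCode.ccfA F (ConvCode.rowDeg F G) := rfl
  have hBmat : ConvCode.matB F G = ConvCode.ccfB F (ConvCode.rowDeg F G) := rfl
  ext ⟨p, q⟩
  simp only [ConvCode.pairPerp, ConvCode.Delta, Set.mem_setOf_eq]
  constructor
  · intro hperp
    have key : ∀ (X : ConvCode.States F G → F) (u : Fin k → F),
        p ⬝ᵥ X + q ⬝ᵥ (X ᵥ* ConvCode.matA F G + u ᵥ* ConvCode.matB F G) = 0 := by
      intro X u
      exact hperp (X, X ᵥ* ConvCode.matA F G + u ᵥ* ConvCode.matB F G) ⟨u, rfl⟩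
    have hB : ∀ i : Fin k, (ConvCode.matB F G *ᵥ q) i = 0 := by
      intro i
      have hk := key 0 (Pi.single i 1)
      rw [Matrix.zero_vecMul, zero_add, dotProduct_zero, zero_add,
        dotProduct_comm, ← Matrix.dotProduct_mulVec, single_dotProduct,
        one_mul] at hk
      exact hk
    have hA : ∀ s, p s + (ConvCode.matA F G *ᵥ q) s = 0 := by
      intro s
      have hk := key (Pi.single s 1) 0
      rw [Matrix.zero_vecMul, add_zero, dotProduct_comm q,
        ← Matrix.dotProduct_mulVec, dotProduct_comm p, ← dotProduct_add,
        single_dotProduct, one_mul, Pi.add_apply] at hk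
      exact hk
    have hq0 : ∀ (i : Fin k) (h : 0 < ConvCode.rowDeg F G i), q ⟨i, ⟨0, h⟩⟩ = 0 := by
      intro i h
      have hk := hB i
      rwa [hBmat, CCAux.mulVec_ccfB, dif_pos h] at hk
    have hp : p = -CCAux.shUp (ConvCode.rowDeg F G) q := by
      funext s
      have hk := hA s
      rw [hAmat, CCAux.mulVec_ccfA] at hk
      simp only [Pi.neg_apply]
      exact eq_neg_of_add_eq_zero_left hk
    refine ⟨-q, ?_⟩
    rw [Matrix.vecMul_transpose, hAmat, CCAux.mulVec_ccfA, CCAux.vecMul_ccfA,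
      CCAux.shUp_neg, CCAux.shDown_neg, neg_neg, CCAux.shDown_shUp q hq0, ← hp]
  · rintro ⟨X, hpq⟩
    rw [Matrix.vecMul_transpose, hAmat, CCAux.mulVec_ccfA, CCAux.vecMul_ccfA,
      Prod.mk.injEq] at hpq
    obtain ⟨hp, hq⟩ := hpq
    rintro ⟨s1, s2⟩ ⟨u, hs⟩
    simp only at hs ⊢
    have hBq : ConvCode.matB F G *ᵥ q = 0 := by
      funext i
      rw [hBmat, CCAux.mulVec_ccfB]
      by_cases h : 0 < ConvCode.rowDeg F G i
      · rw [dif_pos h]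
        have hqi : q ⟨i, ⟨0, h⟩⟩
            = -(CCAux.shDown (ConvCode.rowDeg F G)
                (CCAux.shUp (ConvCode.rowDeg F G) X)) ⟨i, ⟨0, h⟩⟩ :=
          congrFun hq _
        rw [hqi, CCAux.shDown]
        simp
      · rw [dif_neg h]; rfl
    have hAq : ConvCode.matA F G *ᵥ q = -p := by
      rw [hAmat, CCAux.mulVec_ccfA, hq, CCAux.shUp_neg, CCAux.shUp_shDown_shUp, hp]
    rw [hs, dotProduct_add, dotProduct_comm q (u ᵥ* _), ← Matrix.dotProduct_mulVec,
      hBq, dotProduct_zero, add_zero, dotProduct_comm q, ← Matrix.dotProduct_mulVec,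
      hAq]
    simp [dotProduct_comm]
end
end

section
/- Let (A,B,C,E) be the CCF of a minimal encoder G of an (n,k,δ) convolutional code, set 𝓕 = F^δ × F^δ, Δ = {(X,Y) ∈ 𝓕 : Y = XA + uB for some u ∈ F^k}, and Δ⁻ = {(0,Y) : Y ∈ im A}. Then 𝓕 = Δ ⊕ Δ⁻ (direct sum of subspaces). -/
open Polynomial Matrix
open scoped Classical

noncomputable section

namespace ConvAux

open ConvCode

variable {F : Type} [Field F] [Fintype F] {k n : ℕ}

lemma sigma_congr {G : Matrix (Fin k) (Fin n) (Polynomial F)}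
    (f : States F G → F) (i : Fin k) {x y : ℕ} (hx : x < rowDeg F G i)
    (hy : y < rowDeg F G i) (h : x = y) : f ⟨i, ⟨x, hx⟩⟩ = f ⟨i, ⟨y, hy⟩⟩ := by
  subst h; rfl

lemma vecMulA_apply (G : Matrix (Fin k) (Fin n) (Polynomial F))
    (X : States F G → F) (i : Fin k) (ν : Fin (rowDeg F G i)) :
    (X ᵥ* matA F G) ⟨i, ν⟩ =
      if h : 0 < (ν : ℕ) then
        X ⟨i, ⟨(ν : ℕ) - 1, Nat.lt_of_le_of_lt (Nat.sub_le _ _) ν.isLt⟩⟩ else 0 := by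
  classical
  simp only [Matrix.vecMul, dotProduct, matA, ccfA, Matrix.of_apply]
  by_cases h : 0 < (ν : ℕ)
  · rw [dif_pos h]
    have key : ∀ s : States F G, (s.1 = i ∧ (s.2 : ℕ) + 1 = (ν : ℕ)) ↔
        s = ⟨i, ⟨(ν : ℕ) - 1, Nat.lt_of_le_of_lt (Nat.sub_le _ _) ν.isLt⟩⟩ := by
      rintro ⟨j, μ⟩
      dsimp only
      constructor
      · rintro ⟨h1, h2⟩
        subst h1
        simp only [Sigma.mk.inj_iff, heq_eq_eq, Fin.ext_iff, true_and]
        omega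
      · intro hs
        obtain ⟨rfl, h2⟩ := Sigma.mk.inj_iff.mp hs
        have hv := congrArg Fin.val (eq_of_heq h2)
        dsimp only at hv
        exact ⟨rfl, by omega⟩
    simp only [key]
    simp
  · rw [dif_neg h]
    apply Finset.sum_eq_zero
    rintro ⟨j, μ⟩ -
    dsimp only
    rw [if_neg, mul_zero]
    rintro ⟨rfl, h2⟩
    omega

lemma vecMulB_apply (G : Matrix (Fin k) (Fin n) (Polynomial F))
    (u : Fin k → F) (i : Fin k) (ν : Fin (rowDeg F G i)) :
    (u ᵥ* matB F G) ⟨i, ν⟩ = if (ν : ℕ) = 0 then u i else 0 := by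
  classical
  simp only [Matrix.vecMul, dotProduct, matB, ccfB, Matrix.of_apply]
  by_cases h : (ν : ℕ) = 0
  · rw [if_pos h]
    have key : ∀ j : Fin k, (i = j ∧ (ν : ℕ) = 0) ↔ j = i := by
      intro j
      constructor
      · rintro ⟨rfl, -⟩; rfl
      · rintro rfl; exact ⟨rfl, h⟩
    simp only [key]
    simp
  · rw [if_neg h]
    apply Finset.sum_eq_zero
    intro j _
    rw [if_neg, mul_zero]
    rintro ⟨-, h2⟩
    exact h h2

/-- The subspace containing `Δ`. -/
def DeltaSub (G : Matrix (Fin k) (Fin n) (Polynomial F)) :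
    Submodule F ((States F G → F) × (States F G → F)) where
  carrier := {p | ∀ (i : Fin k) (ν : Fin (rowDeg F G i)) (h : 0 < (ν : ℕ)),
    p.2 ⟨i, ν⟩ = p.1 ⟨i, ⟨(ν : ℕ) - 1, Nat.lt_of_le_of_lt (Nat.sub_le _ _) ν.isLt⟩⟩}
  add_mem' := by
    intro p q hp hq i ν h
    simp only [Prod.snd_add, Prod.fst_add, Pi.add_apply, hp i ν h, hq i ν h]
  zero_mem' := by intro i ν h; simp
  smul_mem' := by
    intro c p hp i ν h
    simp only [Prod.smul_snd, Prod.smul_fst, Pi.smul_apply, hp i ν h, smul_eq_mul]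

/-- The subspace containing `Δ⁻`. -/
def DeltaMinusSub (G : Matrix (Fin k) (Fin n) (Polynomial F)) :
    Submodule F ((States F G → F) × (States F G → F)) where
  carrier := {p | p.1 = 0 ∧ ∀ (i : Fin k) (ν : Fin (rowDeg F G i)), (ν : ℕ) = 0 →
    p.2 ⟨i, ν⟩ = 0}
  add_mem' := by
    rintro p q ⟨hp1, hp2⟩ ⟨hq1, hq2⟩
    refine ⟨by simp [hp1, hq1], fun i ν h => ?_⟩
    simp [hp2 i ν h, hq2 i ν h]
  zero_mem' := ⟨rfl, fun i ν h => rfl⟩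
  smul_mem' := by
    rintro c p ⟨hp1, hp2⟩
    refine ⟨by simp [hp1], fun i ν h => ?_⟩
    simp [hp2 i ν h]

lemma delta_subset (G : Matrix (Fin k) (Fin n) (Polynomial F)) :
    Delta F G ⊆ (DeltaSub G : Set _) := by
  rintro ⟨X, Y⟩ ⟨u, hu⟩
  intro i ν h
  dsimp only at hu ⊢
  rw [hu]
  simp only [Pi.add_apply, vecMulA_apply, vecMulB_apply]
  rw [dif_pos h, if_neg (by omega), add_zero]

lemma deltaMinus_subset (G : Matrix (Fin k) (Fin n) (Polynomial F)) :
    DeltaMinus F G ⊆ (DeltaMinusSub G : Set _) := by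
  rintro ⟨Z, Y⟩ ⟨h1, X, hX⟩
  dsimp only at h1 hX
  refine ⟨h1, fun i ν h => ?_⟩
  dsimp only
  rw [hX, vecMulA_apply, dif_neg (by omega)]

end ConvAux

/-- Proposition 4.4(c): `𝓕 = Δ ⊕ Δ⁻`. -/
theorem statement5 {F : Type} [Field F] [Fintype F]
    (k n : ℕ) (G : Matrix (Fin k) (Fin n) (Polynomial F))
    (hG : ConvCode.IsMinimalEncoder F G) :
    Submodule.span F (ConvCode.Delta F G) ⊔ Submodule.span F (ConvCode.DeltaMinus F G) = ⊤ ∧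
    Submodule.span F (ConvCode.Delta F G) ⊓ Submodule.span F (ConvCode.DeltaMinus F G) = ⊥ := by
  classical
  set d := ConvCode.rowDeg F G with hd
  constructor
  · rw [Submodule.eq_top_iff']
    intro p
    -- the Δ-part
    set Y' : ConvCode.States F G → F := fun t =>
      if h : 0 < (t.2 : ℕ) then
        p.1 ⟨t.1, ⟨(t.2 : ℕ) - 1, Nat.lt_of_le_of_lt (Nat.sub_le _ _) t.2.isLt⟩⟩
      else p.2 t with hY'
    have haΔ : ((p.1, Y') : (ConvCode.States F G → F) × (ConvCode.States F G → F)) ∈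
        ConvCode.Delta F G := by
      refine ⟨fun i => if h : 0 < ConvCode.rowDeg F G i then p.2 ⟨i, ⟨0, h⟩⟩ else 0, ?_⟩
      dsimp only
      funext t
      obtain ⟨i, ν⟩ := t
      rw [Pi.add_apply, ConvAux.vecMulA_apply, ConvAux.vecMulB_apply]
      by_cases h : 0 < (ν : ℕ)
      · rw [hY']
        dsimp only
        rw [dif_pos h, dif_pos h, if_neg (by omega), add_zero]
      · rw [hY']
        dsimp only
        rw [dif_neg h, dif_neg h, zero_add, if_pos (by omega),
          dif_pos (lt_of_le_of_lt (Nat.zero_le _) ν.isLt)]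
        exact (ConvAux.sigma_congr p.2 i _ _ (by omega)).symm
    have hbΔm : ((0, p.2 - Y') : (ConvCode.States F G → F) × (ConvCode.States F G → F)) ∈
        ConvCode.DeltaMinus F G := by
      refine ⟨rfl, fun t =>
        if h : (t.2 : ℕ) + 1 < ConvCode.rowDeg F G t.1 then
          p.2 ⟨t.1, ⟨(t.2 : ℕ) + 1, h⟩⟩ - Y' ⟨t.1, ⟨(t.2 : ℕ) + 1, h⟩⟩ else 0, ?_⟩
      dsimp only
      funext t
      obtain ⟨i, ν⟩ := t
      rw [Pi.sub_apply, ConvAux.vecMulA_apply]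
      by_cases h : 0 < (ν : ℕ)
      · rw [dif_pos h]
        have hlt : ((ν : ℕ) - 1) + 1 < ConvCode.rowDeg F G i := by
          have := ν.isLt; omega
        rw [dif_pos hlt]
        rw [ConvAux.sigma_congr p.2 i (x := ((ν : ℕ) - 1) + 1) hlt ν.isLt (by omega),
          ConvAux.sigma_congr Y' i (x := ((ν : ℕ) - 1) + 1) hlt ν.isLt (by omega)]
      · rw [dif_neg h, hY']
        dsimp only
        rw [dif_neg h, sub_self]
    have hsum : p = (p.1, Y') + (0, p.2 - Y') := by
      ext t
      · simp
      · simp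
    rw [hsum]
    exact Submodule.add_mem_sup (Submodule.subset_span haΔ) (Submodule.subset_span hbΔm)
  · rw [eq_bot_iff]
    rintro p ⟨hp1, hp2⟩
    have h1 : p ∈ ConvAux.DeltaSub G :=
      Submodule.span_le.mpr (ConvAux.delta_subset G) hp1
    have h2 : p ∈ ConvAux.DeltaMinusSub G :=
      Submodule.span_le.mpr (ConvAux.deltaMinus_subset G) hp2
    obtain ⟨h21, h22⟩ := h2
    have hp2z : p.2 = 0 := by
      funext t
      obtain ⟨i, ν⟩ := t
      by_cases h : 0 < (ν : ℕ)
      · rw [h1 i ν h, h21]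
        rfl
      · exact h22 i ν (by omega)
    simp only [Submodule.mem_bot]
    exact Prod.ext h21 hp2z
end
end

section
/- Let (A,B,C,E) be the CCF of a minimal encoder G of an (n,k,δ) convolutional code C, and set Δ = {(X,Y) ∈ F^δ × F^δ : Y = XA + uB for some u ∈ F^k}, C_const = C ∩ F^n, and Ω = {(X,Y) ∈ Δ : XC + Y B^T E ∈ C_const}. Then Ω = {(X,Y) ∈ Δ : there exists u ∈ F^k with Y = XA + uB and 0 = XC + uE}. -/
open Polynomial Matrix
open scoped Classical

noncomputable section

namespace ConvProof
open ConvCode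

variable {F : Type} [Field F] [Fintype F] {k n : ℕ}

lemma coeff_prod_le {ι : Type*} (s : Finset ι) (p : ι → Polynomial F) (d : ι → ℕ)
    (h : ∀ i ∈ s, (p i).natDegree ≤ d i) :
    (∏ i ∈ s, p i).coeff (∑ i ∈ s, d i) = ∏ i ∈ s, (p i).coeff (d i) := by
  induction s using Finset.cons_induction with
  | empty => simp
  | cons a s ha ih =>
    rw [Finset.prod_cons, Finset.sum_cons,
      coeff_mul_add_eq_of_natDegree_le (h a (Finset.mem_cons_self a s))
        ((natDegree_prod_le s p).trans
          (Finset.sum_le_sum fun i hi => h i (Finset.mem_cons_of_mem hi))),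
      ih (fun i hi => h i (Finset.mem_cons_of_mem hi)), Finset.prod_cons]

variable (G : Matrix (Fin k) (Fin n) (Polynomial F))

/-- The high-order coefficient matrix. -/
def Ginf : Matrix (Fin k) (Fin n) F :=
  Matrix.of fun i j => (G i j).coeff (rowDeg F G i)

lemma natDegree_le_rowDeg (i : Fin k) (j : Fin n) :
    (G i j).natDegree ≤ rowDeg F G i := by
  unfold rowDeg
  exact Finset.le_sup (f := fun j => (G i j).natDegree) (Finset.mem_univ j)

lemma ginf_full (hG : IsMinimalEncoder F G) (b : Fin k → F)
    (hb : b ᵥ* Ginf G = 0) : b = 0 := by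
  by_cases hδ : ∑ i, rowDeg F G i = 0
  · -- all row degrees zero: use basicness
    have hd : ∀ i, rowDeg F G i = 0 := by
      intro i
      exact (Finset.sum_eq_zero_iff.mp hδ) i (Finset.mem_univ i)
    have hGC : ∀ i j, G i j = Polynomial.C ((G i j).coeff 0) := by
      intro i j
      have : (G i j).natDegree = 0 :=
        Nat.le_zero.mp ((natDegree_le_rowDeg G i j).trans_eq (hd i))
      exact (Polynomial.eq_C_of_natDegree_eq_zero this)
    obtain ⟨H, hH⟩ := hG.1
    have ha : (fun i => Polynomial.C (b i)) ᵥ* G = 0 := by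
      funext j
      have hbj := congrFun hb j
      simp only [Matrix.vecMul, dotProduct, Ginf, Matrix.of_apply, Pi.zero_apply] at hbj ⊢
      calc ∑ i, Polynomial.C (b i) * G i j
          = ∑ i, Polynomial.C (b i * (G i j).coeff 0) := by
            refine Finset.sum_congr rfl fun i _ => ?_
            rw [hGC i j]; simp [hd]
        _ = Polynomial.C (∑ i, b i * (G i j).coeff 0) := by rw [map_sum]
        _ = 0 := by
            rw [show (∑ i, b i * (G i j).coeff 0) = 0 from by simpa [hd] using hbj]; simp
    have : (fun i => Polynomial.C (b i)) = 0 := by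
      calc (fun i => Polynomial.C (b i))
          = (fun i => Polynomial.C (b i)) ᵥ* (G * H) := by rw [hH, Matrix.vecMul_one]
        _ = ((fun i => Polynomial.C (b i)) ᵥ* G) ᵥ* H := (Matrix.vecMul_vecMul _ G H).symm
        _ = 0 := by rw [ha, Matrix.zero_vecMul]
      -- done
    funext i
    have := congrFun this i
    simpa using Polynomial.C_injective (by simpa using this)
  · -- positive degree: use the attained minor
    set δ := ∑ i, rowDeg F G i with hδdef
    have hcd : codeDeg F G = δ := hG.2.symm
    have hcd' : (Finset.univ.sup fun f : Fin k ↪ Fin n =>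
        ((G.submatrix id f).det).natDegree) = δ := by
      have := hcd; unfold codeDeg at this; exact this
    have hne : (Finset.univ : Finset (Fin k ↪ Fin n)).Nonempty := by
      by_contra hemp
      rw [Finset.not_nonempty_iff_eq_empty] at hemp
      refine hδ ?_
      rw [← hcd', hemp, Finset.sup_empty]
      rfl
    obtain ⟨f₀, _, hf₀⟩ := Finset.exists_mem_eq_sup _ hne
      (fun f : Fin k ↪ Fin n => ((G.submatrix id f).det).natDegree)
    have hdeg : ((G.submatrix id f₀).det).natDegree = δ := by
      rw [← hf₀]; exact hcd'
    have hδpos : 0 < δ := Nat.pos_of_ne_zero hδ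
    have hMne : (G.submatrix id f₀).det ≠ 0 := by
      intro h0
      rw [h0, Polynomial.natDegree_zero] at hdeg
      omega
    -- coefficient of degree δ of the minor equals the corresponding minor of Ginf
    have hcoeff : ((G.submatrix id f₀).det).coeff δ = ((Ginf G).submatrix id f₀).det := by
      rw [Matrix.det_apply, Matrix.det_apply, Polynomial.finset_sum_coeff]
      refine Finset.sum_congr rfl fun σ _ => ?_
      rw [Polynomial.coeff_smul]
      congr 1
      have := coeff_prod_le (F := F) Finset.univ
        (fun i => G.submatrix id f₀ (σ i) i) (fun i => rowDeg F G (σ i))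
        (fun i _ => natDegree_le_rowDeg G (σ i) (f₀ i))
      rw [Equiv.sum_comp σ (rowDeg F G)] at this
      rw [hδdef, this]
      rfl
    have hdet : ((Ginf G).submatrix id f₀).det ≠ 0 := by
      rw [← hcoeff, ← hdeg]
      exact Polynomial.leadingCoeff_ne_zero.mpr hMne
    -- conclude b = 0
    have hb' : b ᵥ* ((Ginf G).submatrix id f₀) = 0 := by
      funext j
      have := congrFun hb (f₀ j)
      simpa [Matrix.vecMul, dotProduct, Matrix.submatrix] using this
    have hunit : IsUnit ((Ginf G).submatrix id f₀).det := (Ne.isUnit hdet)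
    calc b = b ᵥ* (1 : Matrix (Fin k) (Fin k) F) := (Matrix.vecMul_one b).symm
      _ = b ᵥ* (((Ginf G).submatrix id f₀) * ((Ginf G).submatrix id f₀)⁻¹) := by
          rw [Matrix.mul_nonsing_inv _ hunit]
      _ = (b ᵥ* ((Ginf G).submatrix id f₀)) ᵥ* ((Ginf G).submatrix id f₀)⁻¹ := by
          rw [Matrix.vecMul_vecMul]
      _ = 0 := by rw [hb', Matrix.zero_vecMul]

lemma const_comb (hG : IsMinimalEncoder F G) (a : Fin k → Polynomial F) (w : Fin n → F)
    (hw : a ᵥ* G = fun j => Polynomial.C (w j)) :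
    ∀ i, a i ≠ 0 → (a i).natDegree = 0 ∧ rowDeg F G i = 0 := by
  intro i hi
  by_contra hcon
  set S : Finset (Fin k) := Finset.univ.filter (fun i' => a i' ≠ 0) with hS
  have hiS : i ∈ S := by simp [hS, hi]
  have hSne : S.Nonempty := ⟨i, hiS⟩
  set N : ℕ := S.sup (fun i' => (a i').natDegree + rowDeg F G i') with hN
  have hNi : (a i).natDegree + rowDeg F G i ≤ N :=
    Finset.le_sup (f := fun i' => (a i').natDegree + rowDeg F G i') hiS
  have hNpos : 0 < N := by omega
  obtain ⟨i₀, hi₀S, hi₀⟩ := Finset.exists_mem_eq_sup S hSne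
    (fun i' => (a i').natDegree + rowDeg F G i')
  have hi₀ne : a i₀ ≠ 0 := by simpa [hS] using hi₀S
  set b : Fin k → F := fun i' => (a i').coeff (N - rowDeg F G i') with hbdef
  have hterm : ∀ i' j, (a i' * G i' j).coeff N = b i' * Ginf G i' j := by
    intro i' j
    by_cases hz : a i' = 0
    · simp [hz, hbdef]
    · have hle : (a i').natDegree + rowDeg F G i' ≤ N :=
        Finset.le_sup (f := fun i' => (a i').natDegree + rowDeg F G i') (by simp [hS, hz])
      have hd : rowDeg F G i' ≤ N := le_trans (Nat.le_add_left _ _) hle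
      have hsplit : N = (N - rowDeg F G i') + rowDeg F G i' := by omega
      rw [hsplit, Polynomial.coeff_mul_add_eq_of_natDegree_le (by omega)
        (natDegree_le_rowDeg G i' j)]
      rfl
  have hbG : b ᵥ* Ginf G = 0 := by
    funext j
    have hwj : ((a ᵥ* G) j).coeff N = 0 := by
      rw [hw]
      simp [Polynomial.coeff_C, Nat.pos_iff_ne_zero.mp hNpos]
    simp only [Matrix.vecMul, dotProduct, Polynomial.finset_sum_coeff] at hwj
    simp only [Matrix.vecMul, dotProduct, Pi.zero_apply]
    rw [← hwj]
    exact Finset.sum_congr rfl fun i' _ => (hterm i' j).symm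
  have hb0 := ginf_full G hG b hbG
  have : b i₀ ≠ 0 := by
    have : N - rowDeg F G i₀ = (a i₀).natDegree := by omega
    rw [hbdef]
    simp only [this]
    exact Polynomial.leadingCoeff_ne_zero.mpr hi₀ne
  exact this (by rw [hb0]; rfl)

lemma constSet_char (hG : IsMinimalEncoder F G) (w : Fin n → F) (hw : w ∈ constSet F G) :
    ∃ c : Fin k → F, (∀ i, rowDeg F G i ≠ 0 → c i = 0) ∧ w = c ᵥ* matE F G := by
  obtain ⟨a, ha0⟩ := hw
  have ha : a ᵥ* G = fun j => Polynomial.C (w j) := ha0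
  refine ⟨fun i => (a i).coeff 0, fun i hdi => ?_, ?_⟩
  · by_cases hz : a i = 0
    · simp [hz]
    · exact absurd ((const_comb G hG a w ha i hz).2) hdi
  · funext j
    have haj := congrFun ha j
    have : w j = ((a ᵥ* G) j).coeff 0 := by rw [haj]; simp
    rw [this]
    simp only [Matrix.vecMul, dotProduct, Polynomial.finset_sum_coeff]
    refine Finset.sum_congr rfl fun i _ => ?_
    rw [Polynomial.mul_coeff_zero]
    rfl

lemma constSet_char' (c : Fin k → F) (hc : ∀ i, rowDeg F G i ≠ 0 → c i = 0) :
    c ᵥ* matE F G ∈ constSet F G := by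
  refine ⟨fun i => Polynomial.C (c i), ?_⟩
  funext j
  show ∑ i, Polynomial.C (c i) * G i j = Polynomial.C ((c ᵥ* matE F G) j)
  have : ∀ i : Fin k, Polynomial.C (c i) * G i j = Polynomial.C (c i * matE F G i j) := by
    intro i
    by_cases hdi : rowDeg F G i = 0
    · have : (G i j).natDegree = 0 :=
        Nat.le_zero.mp ((natDegree_le_rowDeg G i j).trans_eq hdi)
      rw [Polynomial.eq_C_of_natDegree_eq_zero this]
      rw [← Polynomial.C_mul]
      rfl
    · rw [hc i hdi]; simp
  rw [Finset.sum_congr rfl fun i _ => this i, ← map_sum]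
  rfl

lemma vecMul_matB_apply (u : Fin k → F) (t : States F G) :
    (u ᵥ* matB F G) t = if (t.2 : ℕ) = 0 then u t.1 else 0 := by
  simp only [Matrix.vecMul, dotProduct, matB, ccfB, Matrix.of_apply]
  by_cases h : (t.2 : ℕ) = 0
  · simp only [h, and_true]
    rw [Finset.sum_eq_single t.1]
    · simp
    · intro j _ hj
      simp [Ne.symm hj]
    · simp
  · simp [h]

lemma key_lemma (X Y : States F G → F) (u : Fin k → F)
    (hY : Y = X ᵥ* matA F G + u ᵥ* matB F G) (i : Fin k) :
    (Y ᵥ* (matB F G)ᵀ) i = if 0 < rowDeg F G i then u i else 0 := by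
  have hBt : ∀ t : States F G, (matB F G)ᵀ t i = if t.1 = i ∧ (t.2 : ℕ) = 0 then 1 else 0 := by
    intro t; rfl
  by_cases h : 0 < rowDeg F G i
  · simp only [h, if_true]
    have ht0 : (⟨i, ⟨0, h⟩⟩ : States F G) ∈ (Finset.univ : Finset (States F G)) :=
      Finset.mem_univ _
    show ∑ t, Y t * (matB F G)ᵀ t i = u i
    rw [Finset.sum_eq_single (⟨i, ⟨0, h⟩⟩ : States F G)]
    · have hYt : Y ⟨i, ⟨0, h⟩⟩ = u i := by
        rw [hY]
        simp only [Pi.add_apply]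
        have hA : (X ᵥ* matA F G) ⟨i, ⟨0, h⟩⟩ = 0 := by
          simp [Matrix.vecMul, dotProduct, matA, ccfA]
        have hB : (u ᵥ* matB F G) ⟨i, ⟨0, h⟩⟩ = u i := by
          rw [vecMul_matB_apply]; simp
        rw [hA, hB, zero_add]
      rw [hBt]; simp [hYt]
    · intro t _ htne
      rw [hBt]
      rcases t with ⟨t1, t2⟩
      by_cases hc : t1 = i ∧ (t2 : ℕ) = 0
      · exfalso
        apply htne
        obtain ⟨h1, h2⟩ := hc
        subst h1
        congr 1
        exact Fin.ext h2
      · simp [hc]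
    · intro h'; exact absurd ht0 h'
  · rw [if_neg h]
    show ∑ t, Y t * (matB F G)ᵀ t i = 0
    refine Finset.sum_eq_zero fun t _ => ?_
    rw [hBt]
    rcases t with ⟨t1, t2⟩
    by_cases hc : t1 = i
    · exfalso; subst hc; exact absurd t2.2 (by omega)
    · simp [hc]

lemma vecMul_matB_zero (c : Fin k → F) (hc : ∀ i, rowDeg F G i ≠ 0 → c i = 0) :
    c ᵥ* matB F G = 0 := by
  funext t
  rw [vecMul_matB_apply]
  have : c t.1 = 0 := hc t.1 (by have := t.2.2; omega)
  simp [this]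

theorem main (hG : IsMinimalEncoder F G) :
    Omega F G =
      {p | p ∈ Delta F G ∧ ∃ u : Fin k → F,
        p.2 = p.1 ᵥ* matA F G + u ᵥ* matB F G ∧
        0 = p.1 ᵥ* matC F G + u ᵥ* matE F G} := by
  ext p
  obtain ⟨X, Y⟩ := p
  simp only [Omega, Set.mem_setOf_eq]
  constructor
  · rintro ⟨hΔ, hconst⟩
    refine ⟨hΔ, ?_⟩
    obtain ⟨u₀, hY⟩ := hΔ
    obtain ⟨c, hc, hwc⟩ := constSet_char G hG _ hconst
    refine ⟨(Y ᵥ* (matB F G)ᵀ) - c, ?_, ?_⟩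
    · rw [Matrix.sub_vecMul, vecMul_matB_zero G c hc, sub_zero]
      have huB : (Y ᵥ* (matB F G)ᵀ) ᵥ* matB F G = u₀ ᵥ* matB F G := by
        funext t
        rw [vecMul_matB_apply, vecMul_matB_apply]
        by_cases h : (t.2 : ℕ) = 0
        · simp only [h, if_true]
          rw [key_lemma G X Y u₀ hY]
          simp [show 0 < rowDeg F G t.1 from by have := t.2.2; omega]
        · simp [h]
      rw [huB]; exact hY
    · rw [Matrix.sub_vecMul, ← hwc]
      abel
  · rintro ⟨hΔ, u, hY, h0⟩
    refine ⟨hΔ, ?_⟩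
    set c : Fin k → F := (Y ᵥ* (matB F G)ᵀ) - u with hcdef
    have hc : ∀ i, rowDeg F G i ≠ 0 → c i = 0 := by
      intro i hdi
      have := key_lemma G X Y u hY i
      rw [if_pos (by omega)] at this
      simp [hcdef, this]
    have hrw : X ᵥ* matC F G + (Y ᵥ* (matB F G)ᵀ) ᵥ* matE F G = c ᵥ* matE F G := by
      rw [hcdef, Matrix.sub_vecMul]
      linear_combination (norm := module) -h0
    rw [hrw]
    exact constSet_char' G c hc

end ConvProof

/-- Proposition 4.2: `Ω = {(X,Y) ∈ Δ : ∃ u, Y = XA + uB ∧ 0 = XC + uE}`. -/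
theorem statement7 {F : Type} [Field F] [Fintype F]
    (k n : ℕ) (G : Matrix (Fin k) (Fin n) (Polynomial F))
    (hG : ConvCode.IsMinimalEncoder F G) :
    ConvCode.Omega F G =
      {p | p ∈ ConvCode.Delta F G ∧ ∃ u : Fin k → F,
        p.2 = p.1 ᵥ* ConvCode.matA F G + u ᵥ* ConvCode.matB F G ∧
        0 = p.1 ᵥ* ConvCode.matC F G + u ᵥ* ConvCode.matE F G} := ConvProof.main G hG
end
end

section
/- Let (A,B,C,E) be the CCF of a minimal encoder G of an (n,k,δ) convolutional code C. Then ker A ∩ ker C = {0}, and (ker A)C ∩ C_const = {0}, where (ker A)C = {XC : X ∈ ker A} and C_const = C ∩ F^n. -/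
open Polynomial Matrix
open scoped Classical

noncomputable section

section Aux

open ConvCode

variable {F : Type} [Field F] [Fintype F]

private lemma coeff_prod_varying {ι : Type*} (s : Finset ι) (f : ι → Polynomial F) (d : ι → ℕ)
    (h : ∀ i ∈ s, (f i).natDegree ≤ d i) :
    (∏ i ∈ s, f i).coeff (∑ i ∈ s, d i) = ∏ i ∈ s, (f i).coeff (d i) := by
  induction s using Finset.cons_induction with
  | empty => simp
  | cons a s ha ih =>
    have h1 : (∏ i ∈ s, f i).natDegree ≤ ∑ i ∈ s, d i :=
      (Polynomial.natDegree_prod_le s f).trans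
        (Finset.sum_le_sum fun i hi => h i (Finset.mem_cons_of_mem hi))
    rw [Finset.prod_cons, Finset.sum_cons, Finset.prod_cons,
      Polynomial.coeff_mul_add_eq_of_natDegree_le (h a (Finset.mem_cons_self a s)) h1,
      ih (fun i hi => h i (Finset.mem_cons_of_mem hi))]

/-- Rows of the leading row coefficient matrix of a minimal encoder are
linearly independent. -/
private lemma gh_indep {k n : ℕ} (G : Matrix (Fin k) (Fin n) (Polynomial F))
    (hG : ConvCode.IsMinimalEncoder F G) (c : Fin k → F)
    (hc : ∀ j, ∑ i, c i * (G i j).coeff (ConvCode.rowDeg F G i) = 0) : c = 0 := by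
  obtain ⟨⟨H, hH⟩, hdeg⟩ := hG
  by_cases hz : ∑ i, ConvCode.rowDeg F G i = 0
  · -- all row degrees are zero; use basicness at D = 0
    have hd0 : ∀ i, ConvCode.rowDeg F G i = 0 := by
      intro i
      have hle : ConvCode.rowDeg F G i ≤ ∑ i', ConvCode.rowDeg F G i' :=
        Finset.single_le_sum (fun i' _ => Nat.zero_le _) (Finset.mem_univ i)
      omega
    have key : (G.map (Polynomial.constantCoeff (R := F))) *
        (H.map (Polynomial.constantCoeff (R := F))) = 1 := by
      rw [← Matrix.map_mul, hH, Matrix.map_one _ (map_zero _) (map_one _)]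
    have hcG : c ᵥ* (G.map (Polynomial.constantCoeff (R := F))) = 0 := by
      funext j
      have := hc j
      simp only [hd0] at this
      simpa [Matrix.vecMul, dotProduct, Polynomial.constantCoeff_apply] using this
    calc c = c ᵥ* (1 : Matrix (Fin k) (Fin k) F) := (Matrix.vecMul_one c).symm
      _ = c ᵥ* ((G.map (Polynomial.constantCoeff (R := F))) *
            (H.map (Polynomial.constantCoeff (R := F)))) := by rw [key]
      _ = (c ᵥ* (G.map (Polynomial.constantCoeff (R := F)))) ᵥ*
            (H.map (Polynomial.constantCoeff (R := F))) :=
          (Matrix.vecMul_vecMul _ _ _).symm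
      _ = 0 := by rw [hcG, Matrix.zero_vecMul]
  · -- some row degree is positive; use minimality
    have hpos : 0 < ConvCode.codeDeg F G := by rw [← hdeg]; omega
    have hne : (Finset.univ : Finset (Fin k ↪ Fin n)).Nonempty := by
      rcases (Finset.univ : Finset (Fin k ↪ Fin n)).eq_empty_or_nonempty with he | h
      · exfalso
        unfold ConvCode.codeDeg at hpos
        rw [he, Finset.sup_empty] at hpos
        simp at hpos
      · exact h
    obtain ⟨f, -, hf⟩ := Finset.exists_mem_eq_sup Finset.univ hne
      (fun f : Fin k ↪ Fin n => ((G.submatrix id f).det).natDegree)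
    have hdegM : ((G.submatrix id f).det).natDegree = ∑ i, ConvCode.rowDeg F G i := by
      rw [← hf]; exact hdeg.symm
    set N : Matrix (Fin k) (Fin k) F :=
      Matrix.of fun i j => (G i (f j)).coeff (ConvCode.rowDeg F G i) with hNdef
    have hcoeff : ((G.submatrix id f).det).coeff (∑ i, ConvCode.rowDeg F G i) = N.det := by
      rw [Matrix.det_apply', Matrix.det_apply', Polynomial.finset_sum_coeff]
      refine Finset.sum_congr rfl fun σ _ => ?_
      have hcast : (((Equiv.Perm.sign σ : ℤ) : Polynomial F)) =
          Polynomial.C ((Equiv.Perm.sign σ : ℤ) : F) := (Polynomial.C_eq_intCast _).symm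
      have hsum : ∑ i, ConvCode.rowDeg F G i = ∑ i, ConvCode.rowDeg F G (σ i) :=
        (Equiv.sum_comp σ _).symm
      rw [hcast, Polynomial.coeff_C_mul, hsum, coeff_prod_varying Finset.univ
        (fun i => G.submatrix id f (σ i) i) (fun i => ConvCode.rowDeg F G (σ i))
        (fun i _ => Finset.le_sup (f := fun j => (G (σ i) j).natDegree) (Finset.mem_univ (f i)))]
      rfl
    have hMne : (G.submatrix id f).det ≠ 0 := by
      intro h0
      rw [h0, Polynomial.natDegree_zero] at hdegM
      omega
    have hNdet : N.det ≠ 0 := by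
      rw [← hcoeff, ← hdegM]
      exact Polynomial.leadingCoeff_ne_zero.mpr hMne
    have hu : IsUnit N.det := isUnit_iff_ne_zero.mpr hNdet
    have hcN : c ᵥ* N = 0 := by
      funext j
      simpa [hNdef, Matrix.vecMul, dotProduct] using hc (f j)
    calc c = c ᵥ* (1 : Matrix (Fin k) (Fin k) F) := (Matrix.vecMul_one c).symm
      _ = c ᵥ* (N * N⁻¹) := by rw [Matrix.mul_nonsing_inv N hu]
      _ = (c ᵥ* N) ᵥ* N⁻¹ := (Matrix.vecMul_vecMul _ _ _).symm
      _ = 0 := by rw [hcN, Matrix.zero_vecMul]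

/-- If `X A = 0`, then `X` vanishes on all non-top state indices. -/
private lemma kerA_struct {k n : ℕ} (G : Matrix (Fin k) (Fin n) (Polynomial F))
    (X : ConvCode.States F G → F) (hA : X ᵥ* ConvCode.matA F G = 0) :
    ∀ s : ConvCode.States F G, (s.2 : ℕ) + 1 ≠ ConvCode.rowDeg F G s.1 → X s = 0 := by
  rintro ⟨i, ν⟩ hs
  have hs' : (ν : ℕ) + 1 ≠ ConvCode.rowDeg F G i := hs
  have hlt : (ν : ℕ) + 1 < ConvCode.rowDeg F G i := by
    have := ν.isLt
    omega
  set t : ConvCode.States F G := ⟨i, ⟨(ν : ℕ) + 1, hlt⟩⟩ with ht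
  have h0 := congrFun hA t
  have hsum : (X ᵥ* ConvCode.matA F G) t = X ⟨i, ν⟩ := by
    simp only [Matrix.vecMul, dotProduct, ConvCode.matA, ConvCode.ccfA, Matrix.of_apply]
    rw [Finset.sum_eq_single (⟨i, ν⟩ : ConvCode.States F G)]
    · simp [ht, t]
    · rintro ⟨i', ν'⟩ - hne
      rw [if_neg, mul_zero]
      rintro ⟨h1, h2⟩
      apply hne
      simp only [ht, t] at h1 h2
      subst h1
      have : ν' = ν := Fin.ext (by simpa using h2)
      rw [this]
    · intro h; exact absurd (Finset.mem_univ _) h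
  rw [hsum] at h0
  simpa using h0

/-- For `X` with `X A = 0`, `(X C)_j = ∑_i c_i (G i j).coeff (d i)` where `c` picks
the top entries of `X`. -/
private lemma vecMul_matC_eq {k n : ℕ} (G : Matrix (Fin k) (Fin n) (Polynomial F))
    (X : ConvCode.States F G → F) (hA : X ᵥ* ConvCode.matA F G = 0) (j : Fin n) :
    (X ᵥ* ConvCode.matC F G) j =
      ∑ i, (if h : 0 < ConvCode.rowDeg F G i then
              X ⟨i, ⟨ConvCode.rowDeg F G i - 1, by omega⟩⟩ else 0) *
            (G i j).coeff (ConvCode.rowDeg F G i) := by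
  have hker := kerA_struct G X hA
  simp only [Matrix.vecMul, dotProduct, ConvCode.matC, ConvCode.ccfC, Matrix.of_apply]
  rw [← Finset.univ_sigma_univ, Finset.sum_sigma]
  refine Finset.sum_congr rfl fun i _ => ?_
  dsimp only
  by_cases h : 0 < ConvCode.rowDeg F G i
  · rw [dif_pos h]
    rw [Fintype.sum_eq_single (⟨ConvCode.rowDeg F G i - 1, by omega⟩ :
        Fin (ConvCode.rowDeg F G i))]
    · congr 2
      simp only [Fin.val_mk]
      omega
    · intro ν hne
      rw [hker ⟨i, ν⟩ ?_, zero_mul]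
      have h1 := ν.isLt
      have h2 : (ν : ℕ) ≠ ConvCode.rowDeg F G i - 1 := by
        intro hc
        exact hne (Fin.ext (by simp only [Fin.val_mk]; omega))
      simp only
      omega
  · have h0 : ConvCode.rowDeg F G i = 0 := by omega
    rw [dif_neg h, zero_mul]
    apply Finset.sum_eq_zero
    intro ν _
    exact absurd ν.isLt (by omega)

/-- Predictable-degree-type property: if `u G` is a constant vector, then `u_i = 0`
for every row with positive row degree. -/
private lemma pdp {k n : ℕ} (G : Matrix (Fin k) (Fin n) (Polynomial F))
    (hG : ConvCode.IsMinimalEncoder F G) (u : Fin k → Polynomial F) (w : Fin n → F)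
    (huG : u ᵥ* G = fun j => Polynomial.C (w j)) :
    ∀ i, ConvCode.rowDeg F G i ≠ 0 → u i = 0 := by
  by_contra hcon
  push_neg at hcon
  obtain ⟨i₀, hdi₀, hui₀⟩ := hcon
  set S := Finset.univ.filter (fun i => u i ≠ 0) with hS
  have hi₀S : i₀ ∈ S := by simp [hS, hui₀]
  set N := S.sup fun i => (u i).natDegree + ConvCode.rowDeg F G i with hNdef
  have hN1 : 1 ≤ N := by
    have h : (u i₀).natDegree + ConvCode.rowDeg F G i₀ ≤ N := by
      rw [hNdef]
      exact Finset.le_sup (f := fun i => (u i).natDegree + ConvCode.rowDeg F G i) hi₀S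
    omega
  obtain ⟨i₁, hi₁S, hNeq⟩ := Finset.exists_mem_eq_sup S ⟨i₀, hi₀S⟩
    (fun i => (u i).natDegree + ConvCode.rowDeg F G i)
  set b : Fin k → F := fun i =>
    if (u i).natDegree + ConvCode.rowDeg F G i = N ∧ u i ≠ 0 then (u i).leadingCoeff else 0
    with hbdef
  have hb : ∀ j, ∑ i, b i * (G i j).coeff (ConvCode.rowDeg F G i) = 0 := by
    intro j
    have h1 : ((u ᵥ* G) j).coeff N = 0 := by
      rw [huG]
      simp [Polynomial.coeff_C]
      omega
    simp only [Matrix.vecMul, dotProduct, Polynomial.finset_sum_coeff] at h1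
    rw [← h1]
    refine Finset.sum_congr rfl fun i _ => ?_
    by_cases hu0 : u i = 0
    · simp [hbdef, hu0]
    · by_cases heq : (u i).natDegree + ConvCode.rowDeg F G i = N
      · have hbi : b i = (u i).leadingCoeff := if_pos ⟨heq, hu0⟩
        have hb2 : (G i j).natDegree ≤ ConvCode.rowDeg F G i := by
          unfold ConvCode.rowDeg
          exact Finset.le_sup (f := fun j' => (G i j').natDegree) (Finset.mem_univ j)
        rw [hbi, ← heq, Polynomial.coeff_mul_add_eq_of_natDegree_le le_rfl hb2]
        rfl
      · have hiS : i ∈ S := Finset.mem_filter.mpr ⟨Finset.mem_univ i, hu0⟩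
        have hle : (u i).natDegree + ConvCode.rowDeg F G i ≤ N :=
          Finset.le_sup (f := fun i => (u i).natDegree + ConvCode.rowDeg F G i) hiS
        have hlt : (u i).natDegree + ConvCode.rowDeg F G i < N := by omega
        have hbi : b i = 0 := if_neg (fun hc => heq hc.1)
        rw [hbi, zero_mul]
        symm
        apply Polynomial.coeff_eq_zero_of_natDegree_lt
        calc (u i * G i j).natDegree ≤ (u i).natDegree + (G i j).natDegree :=
              Polynomial.natDegree_mul_le
          _ ≤ (u i).natDegree + ConvCode.rowDeg F G i := by
              have hb2 : (G i j).natDegree ≤ ConvCode.rowDeg F G i := by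
                unfold ConvCode.rowDeg
                exact Finset.le_sup (f := fun j' => (G i j').natDegree) (Finset.mem_univ j)
              omega
          _ < N := hlt
  have hb0 := gh_indep G hG b hb
  have hmem : u i₁ ≠ 0 := (Finset.mem_filter.mp hi₁S).2
  have : b i₁ = (u i₁).leadingCoeff := by rw [hbdef]; exact if_pos ⟨hNeq.symm, hmem⟩
  rw [hb0] at this
  exact hmem (Polynomial.leadingCoeff_eq_zero.mp this.symm)

end Aux

/-- Remark 4.1 (v),(vi): `ker A ∩ ker C = {0}` and `(ker A)C ∩ C_const = {0}`. -/
theorem statement8 {F : Type} [Field F] [Fintype F]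
    (k n : ℕ) (G : Matrix (Fin k) (Fin n) (Polynomial F))
    (hG : ConvCode.IsMinimalEncoder F G) :
    {X : ConvCode.States F G → F |
        X ᵥ* ConvCode.matA F G = 0 ∧ X ᵥ* ConvCode.matC F G = 0} = {0} ∧
    {w : Fin n → F | ∃ X : ConvCode.States F G → F,
        X ᵥ* ConvCode.matA F G = 0 ∧ w = X ᵥ* ConvCode.matC F G} ∩
      ConvCode.constSet F G = {0} := by
  -- some shared facts
  have topZero : ∀ (X : ConvCode.States F G → F), X ᵥ* ConvCode.matA F G = 0 →
      X ᵥ* ConvCode.matC F G = 0 → X = 0 := by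
    intro X hA hC
    set c : Fin k → F := fun i =>
      if h : 0 < ConvCode.rowDeg F G i then
        X ⟨i, ⟨ConvCode.rowDeg F G i - 1, by omega⟩⟩ else 0 with hcdef
    have hc : ∀ j, ∑ i, c i * (G i j).coeff (ConvCode.rowDeg F G i) = 0 := by
      intro j
      rw [← vecMul_matC_eq G X hA j, hC]
      rfl
    have hc0 := gh_indep G hG c hc
    funext s
    by_cases htop : (s.2 : ℕ) + 1 = ConvCode.rowDeg F G s.1
    · have hpos : 0 < ConvCode.rowDeg F G s.1 := by omega
      have hcs : c s.1 = 0 := congrFun hc0 s.1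
      simp only [hcdef, dif_pos hpos] at hcs
      have h2 : s.2 = ⟨ConvCode.rowDeg F G s.1 - 1, by omega⟩ := Fin.ext (by simp; omega)
      calc X s = X ⟨s.1, s.2⟩ := congrArg X (Sigma.eta s).symm
        _ = X ⟨s.1, ⟨ConvCode.rowDeg F G s.1 - 1, by omega⟩⟩ :=
            congrArg (fun ν => X ⟨s.1, ν⟩) h2
        _ = 0 := hcs
    · exact kerA_struct G X hA s htop
  constructor
  · ext X
    simp only [Set.mem_setOf_eq, Set.mem_singleton_iff]
    constructor
    · rintro ⟨hA, hC⟩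
      exact topZero X hA hC
    · rintro rfl
      constructor <;> exact Matrix.zero_vecMul _
  · ext w
    simp only [Set.mem_inter_iff, Set.mem_setOf_eq, Set.mem_singleton_iff]
    constructor
    · rintro ⟨⟨X, hA, hw⟩, hconst⟩
      obtain ⟨u, hu0⟩ := hconst
      have hu : u ᵥ* G = fun j => Polynomial.C (w j) := hu0
      set c : Fin k → F := fun i =>
        if h : 0 < ConvCode.rowDeg F G i then
          X ⟨i, ⟨ConvCode.rowDeg F G i - 1, by omega⟩⟩ else 0 with hcdef
      have hwc : ∀ j, w j = ∑ i, c i * (G i j).coeff (ConvCode.rowDeg F G i) := by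
        intro j
        rw [hw, vecMul_matC_eq G X hA j]
      -- use PDP on u
      have hupdp := pdp G hG u w hu
      set c' : Fin k → F := fun i =>
        if ConvCode.rowDeg F G i = 0 then (u i).coeff 0 else 0 with hc'def
      have hwc' : ∀ j, w j = ∑ i, c' i * (G i j).coeff (ConvCode.rowDeg F G i) := by
        intro j
        have h0 : ((u ᵥ* G) j).coeff 0 = w j := by rw [hu]; simp
        simp only [Matrix.vecMul, dotProduct, Polynomial.finset_sum_coeff] at h0
        rw [← h0]
        refine Finset.sum_congr rfl fun i _ => ?_
        by_cases hd : ConvCode.rowDeg F G i = 0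
        · simp [hc'def, hd, Polynomial.mul_coeff_zero]
        · simp [hc'def, hd, hupdp i hd]
      have hdiff : ∀ j, ∑ i, (c i - c' i) * (G i j).coeff (ConvCode.rowDeg F G i) = 0 := by
        intro j
        simp only [sub_mul, Finset.sum_sub_distrib]
        rw [← hwc j, ← hwc' j, sub_self]
      have hcc' := gh_indep G hG _ hdiff
      have hc0 : c = 0 := by
        funext i
        have h1 : c i - c' i = 0 := congrFun hcc' i
        by_cases hd : ConvCode.rowDeg F G i = 0
        · rw [hcdef]; simp [hd]
        · have : c' i = 0 := by rw [hc'def]; simp [hd]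
          rw [this, sub_zero] at h1
          exact h1
      funext j
      rw [hwc j, hc0]
      simp
    · rintro rfl
      refine ⟨⟨0, Matrix.zero_vecMul _, (Matrix.zero_vecMul _).symm⟩, ?_⟩
      refine ⟨0, ?_⟩
      funext j
      simp [Matrix.zero_vecMul]
end
end

section
/- Let (A,B,C,E) be the CCF of a minimal encoder G of an (n,k,δ) convolutional code C, and set Δ = {(X,Y) ∈ F^δ × F^δ : Y = XA + uB for some u ∈ F^k}, C_const = C ∩ F^n, and Ω = {(X,Y) ∈ Δ : XC + Y B^T E ∈ C_const}. Then the projection Π₁: F^δ × F^δ → F^δ onto the first component, (X,Y) ↦ X, is injective when restricted to Ω. -/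
open Polynomial Matrix
open scoped Classical

noncomputable section

namespace ConvCodeAux

open ConvCode

variable {F : Type} [Field F]

lemma vecMul_apply {α : Type*} [NonUnitalNonAssocSemiring α] {m n' : Type} [Fintype m]
    (v : m → α) (M : Matrix m n' α) (j : n') :
    (v ᵥ* M) j = ∑ i, v i * M i j := rfl

lemma coeff_prod_bounds {ι : Type} (s : Finset ι) (f : ι → Polynomial F) (m : ι → ℕ)
    (h : ∀ i ∈ s, (f i).natDegree ≤ m i) :
    (∏ i ∈ s, f i).coeff (∑ i ∈ s, m i) = ∏ i ∈ s, (f i).coeff (m i) := by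
  classical
  induction s using Finset.induction_on with
  | empty => simp
  | @insert a s ha ih =>
    rw [Finset.prod_insert ha, Finset.sum_insert ha, Finset.prod_insert ha,
      Polynomial.coeff_mul_add_eq_of_natDegree_le (h a (Finset.mem_insert_self a s))
        ((Polynomial.natDegree_prod_le _ _).trans
          (Finset.sum_le_sum fun i hi => h i (Finset.mem_insert_of_mem hi))),
      ih fun i hi => h i (Finset.mem_insert_of_mem hi)]

/-- The leading row coefficient matrix of `G`. -/
def Ghr {k n : ℕ} (G : Matrix (Fin k) (Fin n) (Polynomial F)) : Matrix (Fin k) (Fin n) F :=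
  Matrix.of fun i j => (G i j).coeff (ConvCode.rowDeg F G i)

lemma natDegree_le_rowDeg {k n : ℕ} (G : Matrix (Fin k) (Fin n) (Polynomial F))
    (i : Fin k) (j : Fin n) : (G i j).natDegree ≤ ConvCode.rowDeg F G i :=
  Finset.le_sup (f := fun j => (G i j).natDegree) (Finset.mem_univ j)

lemma basic_coeff0_cancel {k n : ℕ} {G : Matrix (Fin k) (Fin n) (Polynomial F)}
    (hB : ConvCode.IsBasic F G) {b b' : Fin k → F}
    (h : b ᵥ* ConvCode.matE F G = b' ᵥ* ConvCode.matE F G) : b = b' := by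
  obtain ⟨H, hH⟩ := hB
  have hE : ConvCode.matE F G = G.map (Polynomial.constantCoeff) := by
    ext i j
    simp [ConvCode.matE, ConvCode.ccfE, Matrix.map_apply, Polynomial.constantCoeff_apply]
  have key : ConvCode.matE F G * H.map (Polynomial.constantCoeff) = 1 := by
    rw [hE, ← Matrix.map_mul, hH, Matrix.map_one _ (map_zero _) (map_one _)]
  calc b = (b ᵥ* ConvCode.matE F G) ᵥ* H.map (Polynomial.constantCoeff) := by
        rw [Matrix.vecMul_vecMul, key, Matrix.vecMul_one]
    _ = (b' ᵥ* ConvCode.matE F G) ᵥ* H.map (Polynomial.constantCoeff) := by rw [h]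
    _ = b' := by rw [Matrix.vecMul_vecMul, key, Matrix.vecMul_one]

lemma ghr_vecMul_eq_zero {k n : ℕ} {G : Matrix (Fin k) (Fin n) (Polynomial F)}
    (hG : ConvCode.IsMinimalEncoder F G) {b : Fin k → F}
    (hb : b ᵥ* Ghr G = 0) : b = 0 := by
  classical
  by_cases hδ : ∑ i, ConvCode.rowDeg F G i = 0
  · have hd : ∀ i, ConvCode.rowDeg F G i = 0 := fun i =>
      Finset.sum_eq_zero_iff.mp hδ i (Finset.mem_univ i)
    have hEq : Ghr G = ConvCode.matE F G := by
      ext i j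
      simp [Ghr, ConvCode.matE, ConvCode.ccfE, hd i]
    refine basic_coeff0_cancel hG.1 (b' := 0) ?_
    rw [← hEq, hb, Matrix.zero_vecMul]
  · have hsup : (Finset.univ.sup fun f : Fin k ↪ Fin n =>
        ((G.submatrix id f).det).natDegree) = ∑ i, ConvCode.rowDeg F G i := hG.2.symm
    have hne : (Finset.univ : Finset (Fin k ↪ Fin n)).Nonempty := by
      by_contra hcon
      rw [Finset.not_nonempty_iff_eq_empty] at hcon
      rw [hcon, Finset.sup_empty] at hsup
      exact hδ hsup.symm
    obtain ⟨f, -, hf⟩ := Finset.exists_mem_eq_sup Finset.univ hne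
      (fun f : Fin k ↪ Fin n => ((G.submatrix id f).det).natDegree)
    have hdeg : ((G.submatrix id f).det).natDegree = ∑ i, ConvCode.rowDeg F G i := by
      rw [← hf]; exact hsup
    have hdet0 : (G.submatrix id f).det ≠ 0 := by
      intro hcon
      rw [hcon, Polynomial.natDegree_zero] at hdeg
      exact hδ hdeg.symm
    have hcoeff : ((G.submatrix id f).det).coeff (∑ i, ConvCode.rowDeg F G i) ≠ 0 := by
      have := Polynomial.leadingCoeff_ne_zero.mpr hdet0
      rwa [Polynomial.leadingCoeff, hdeg] at this
    have hclaim : ((G.submatrix id f).det).coeff (∑ i, ConvCode.rowDeg F G i)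
        = ((Ghr G).submatrix id f).det := by
      rw [Matrix.det_apply, Matrix.det_apply, Polynomial.finset_sum_coeff]
      refine Finset.sum_congr rfl fun σ _ => ?_
      rw [Polynomial.coeff_smul]
      congr 1
      have hsum : ∑ i, ConvCode.rowDeg F G (σ i) = ∑ i, ConvCode.rowDeg F G i :=
        Equiv.sum_comp σ (ConvCode.rowDeg F G)
      simp only [Matrix.submatrix_apply, id_eq]
      rw [← hsum,
        coeff_prod_bounds Finset.univ _ (fun i => ConvCode.rowDeg F G (σ i))
          (fun i _ => natDegree_le_rowDeg G (σ i) (f i))]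
      rfl
    have hdetGhr : ((Ghr G).submatrix id f).det ≠ 0 := hclaim ▸ hcoeff
    have hb' : b ᵥ* (Ghr G).submatrix id f = 0 := by
      funext j
      have := congrFun hb (f j)
      simpa [vecMul_apply, Matrix.submatrix_apply] using this
    have hfin : b ᵥ* ((Ghr G).submatrix id f * ((Ghr G).submatrix id f)⁻¹) = 0 := by
      rw [← Matrix.vecMul_vecMul, hb', Matrix.zero_vecMul]
    rwa [Matrix.mul_nonsing_inv _ (isUnit_iff_ne_zero.mpr hdetGhr),
      Matrix.vecMul_one] at hfin

lemma pdp_aux {k n : ℕ} {G : Matrix (Fin k) (Fin n) (Polynomial F)}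
    (hG : ConvCode.IsMinimalEncoder F G) :
    ∀ (M : ℕ) (w : Fin k → Polynomial F),
      (∀ i, w i ≠ 0 → (w i).natDegree + ConvCode.rowDeg F G i ≤ M) →
      (∀ j t, 0 < t → ((w ᵥ* G) j).coeff t = 0) →
      ∀ i, 0 < ConvCode.rowDeg F G i → w i = 0 := by
  intro M
  induction M with
  | zero =>
    intro w hbnd _ i hi
    by_contra hne
    have := hbnd i hne
    omega
  | succ M ih =>
    intro w hbnd hw i hi
    have hb0 : (fun i' => (w i').coeff (M + 1 - ConvCode.rowDeg F G i')) ᵥ* Ghr G = 0 := by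
      funext j
      have hterm : ∀ i', (w i').coeff (M + 1 - ConvCode.rowDeg F G i') * Ghr G i' j
          = (w i' * G i' j).coeff (M + 1) := by
        intro i'
        by_cases h0 : w i' = 0
        · simp [h0]
        · have h1 := hbnd i' h0
          have h2 : ConvCode.rowDeg F G i' ≤ M + 1 := le_trans (Nat.le_add_left _ _) h1
          have h3 : (M + 1 - ConvCode.rowDeg F G i') + ConvCode.rowDeg F G i' = M + 1 :=
            Nat.sub_add_cancel h2
          have h4 := Polynomial.coeff_mul_add_eq_of_natDegree_le (f := w i') (g := G i' j)
            (df := M + 1 - ConvCode.rowDeg F G i') (dg := ConvCode.rowDeg F G i')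
            (by omega) (natDegree_le_rowDeg G i' j)
          rw [h3] at h4
          exact h4.symm
      calc ((fun i' => (w i').coeff (M + 1 - ConvCode.rowDeg F G i')) ᵥ* Ghr G) j
          = ∑ i', (w i').coeff (M + 1 - ConvCode.rowDeg F G i') * Ghr G i' j :=
            vecMul_apply _ _ _
        _ = ∑ i', (w i' * G i' j).coeff (M + 1) :=
            Finset.sum_congr rfl fun i' _ => hterm i'
        _ = ((w ᵥ* G) j).coeff (M + 1) := by
            rw [vecMul_apply w G j, Polynomial.finset_sum_coeff]
        _ = (0 : F) := hw j (M + 1) (by omega)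
    have hbz := ghr_vecMul_eq_zero hG hb0
    refine ih w (fun i' h0 => ?_) hw i hi
    have h1 := hbnd i' h0
    by_contra hgt
    push_neg at hgt
    have heq : (w i').natDegree = M + 1 - ConvCode.rowDeg F G i' := by omega
    have hlc : (w i').coeff (M + 1 - ConvCode.rowDeg F G i') ≠ 0 := by
      rw [← heq]
      have := Polynomial.leadingCoeff_ne_zero.mpr h0
      rwa [Polynomial.leadingCoeff] at this
    exact hlc (congrFun hbz i')

lemma pdp {k n : ℕ} {G : Matrix (Fin k) (Fin n) (Polynomial F)}
    (hG : ConvCode.IsMinimalEncoder F G) (w : Fin k → Polynomial F)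
    (hw : ∀ j t, 0 < t → ((w ᵥ* G) j).coeff t = 0) :
    ∀ i, 0 < ConvCode.rowDeg F G i → w i = 0 :=
  pdp_aux hG (Finset.univ.sup fun i => (w i).natDegree + ConvCode.rowDeg F G i) w
    (fun i _ => Finset.le_sup (f := fun i => (w i).natDegree + ConvCode.rowDeg F G i)
      (Finset.mem_univ i)) hw

lemma vecMul_matB_apply {k n : ℕ} (G : Matrix (Fin k) (Fin n) (Polynomial F))
    (z : Fin k → F) (t : ConvCode.States F G) :
    (z ᵥ* ConvCode.matB F G) t = if (t.2 : ℕ) = 0 then z t.1 else 0 := by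
  classical
  rw [vecMul_apply]
  by_cases h2 : (t.2 : ℕ) = 0
  · simp [ConvCode.matB, ConvCode.ccfB, h2, mul_ite, Finset.sum_ite_eq]
  · simp [ConvCode.matB, ConvCode.ccfB, h2]

lemma vecMul_matBT_pos {k n : ℕ} (G : Matrix (Fin k) (Fin n) (Polynomial F))
    (Z : ConvCode.States F G → F) (i : Fin k) (hi : 0 < ConvCode.rowDeg F G i) :
    (Z ᵥ* (ConvCode.matB F G)ᵀ) i = Z ⟨i, ⟨0, hi⟩⟩ := by
  classical
  rw [vecMul_apply]
  rw [Finset.sum_eq_single (⟨i, ⟨0, hi⟩⟩ : ConvCode.States F G)]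
  · simp [ConvCode.matB, ConvCode.ccfB]
  · rintro ⟨t1, t2⟩ - htne
    by_cases hc : t1 = i ∧ (t2 : ℕ) = 0
    · exfalso
      apply htne
      rcases hc with ⟨rfl, h0⟩
      exact Sigma.ext rfl (heq_of_eq (Fin.ext h0))
    · simp [ConvCode.matB, ConvCode.ccfB, hc]
  · intro hmem
    exact absurd (Finset.mem_univ _) hmem

lemma vecMul_matBT_zero {k n : ℕ} (G : Matrix (Fin k) (Fin n) (Polynomial F))
    (Z : ConvCode.States F G → F) (i : Fin k) (hi : ConvCode.rowDeg F G i = 0) :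
    (Z ᵥ* (ConvCode.matB F G)ᵀ) i = 0 := by
  classical
  rw [vecMul_apply]
  apply Finset.sum_eq_zero
  rintro ⟨t1, t2⟩ -
  have hc : ¬(t1 = i ∧ (t2 : ℕ) = 0) := by
    rintro ⟨rfl, -⟩
    have := t2.isLt
    omega
  simp [ConvCode.matB, ConvCode.ccfB, hc]

end ConvCodeAux

/-- Proposition 4.5(a): the projection onto the first component is injective on `Ω`. -/
theorem statement9 {F : Type} [Field F] [Fintype F]
    (k n : ℕ) (G : Matrix (Fin k) (Fin n) (Polynomial F))
    (hG : ConvCode.IsMinimalEncoder F G) :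
    Set.InjOn Prod.fst (ConvCode.Omega F G) := by
  classical
  rintro p hp q hq hpq
  obtain ⟨⟨u, hu⟩, hc⟩ := hp
  obtain ⟨⟨u', hu'⟩, hc'⟩ := hq
  obtain ⟨v, hv0⟩ := hc
  obtain ⟨v', hv0'⟩ := hc'
  have hv : v ᵥ* G = fun j => Polynomial.C
      ((p.1 ᵥ* ConvCode.matC F G + (p.2 ᵥ* (ConvCode.matB F G)ᵀ) ᵥ* ConvCode.matE F G) j) := hv0
  have hv' : v' ᵥ* G = fun j => Polynomial.C
      ((q.1 ᵥ* ConvCode.matC F G + (q.2 ᵥ* (ConvCode.matB F G)ᵀ) ᵥ* ConvCode.matE F G) j) := hv0'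
  refine Prod.ext hpq ?_
  -- the difference of the second components
  have hY : p.2 - q.2 = (u - u') ᵥ* ConvCode.matB F G := by
    rw [hu, hu', hpq, Matrix.sub_vecMul]
    abel
  set a' : Fin k → F := (p.2 - q.2) ᵥ* (ConvCode.matB F G)ᵀ with ha'
  -- the difference of the two constant codewords
  have hwG : (v - v') ᵥ* G = fun j => Polynomial.C ((a' ᵥ* ConvCode.matE F G) j) := by
    rw [Matrix.sub_vecMul, hv, hv']
    funext j
    rw [Pi.sub_apply, ← map_sub]
    congr 1
    have hcc : (p.1 ᵥ* ConvCode.matC F G + (p.2 ᵥ* (ConvCode.matB F G)ᵀ) ᵥ* ConvCode.matE F G)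
        - (q.1 ᵥ* ConvCode.matC F G + (q.2 ᵥ* (ConvCode.matB F G)ᵀ) ᵥ* ConvCode.matE F G)
        = a' ᵥ* ConvCode.matE F G := by
      rw [ha', Matrix.sub_vecMul, Matrix.sub_vecMul, hpq]
      abel
    exact congrFun hcc j
  have hconst : ∀ j t, 0 < t → (((v - v') ᵥ* G) j).coeff t = 0 := by
    intro j t ht
    rw [hwG]
    simp [Polynomial.coeff_C, Nat.pos_iff_ne_zero.mp ht]
  have hvanish := ConvCodeAux.pdp hG (v - v') hconst
  -- the constant coefficients of v - v' recover a'
  have h0 : (fun i => ((v - v') i).coeff 0) ᵥ* ConvCode.matE F G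
      = a' ᵥ* ConvCode.matE F G := by
    funext j
    calc ((fun i => ((v - v') i).coeff 0) ᵥ* ConvCode.matE F G) j
        = ∑ i, ((v - v') i).coeff 0 * ConvCode.matE F G i j := ConvCodeAux.vecMul_apply _ _ _
      _ = ∑ i, ((v - v') i * G i j).coeff 0 := by
          refine Finset.sum_congr rfl fun i _ => ?_
          rw [Polynomial.mul_coeff_zero]
          rfl
      _ = (((v - v') ᵥ* G) j).coeff 0 := by
          rw [ConvCodeAux.vecMul_apply (v - v') G j, Polynomial.finset_sum_coeff]
      _ = (a' ᵥ* ConvCode.matE F G) j := by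
          rw [hwG]
          simp [Polynomial.coeff_C]
  have ha : (fun i => ((v - v') i).coeff 0) = a' := ConvCodeAux.basic_coeff0_cancel hG.1 h0
  -- conclude componentwise
  have hsub : p.2 - q.2 = 0 := by
    funext t
    rw [hY, ConvCodeAux.vecMul_matB_apply]
    by_cases h2 : (t.2 : ℕ) = 0
    · rw [if_pos h2]
      have hpos : 0 < ConvCode.rowDeg F G t.1 := lt_of_le_of_lt (Nat.zero_le _) t.2.isLt
      have h1 : a' t.1 = (p.2 - q.2) ⟨t.1, ⟨0, hpos⟩⟩ :=
        ConvCodeAux.vecMul_matBT_pos G _ t.1 hpos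
      have h2' : (p.2 - q.2) (⟨t.1, ⟨0, hpos⟩⟩ : ConvCode.States F G) = (u - u') t.1 := by
        rw [hY, ConvCodeAux.vecMul_matB_apply]
        simp
      have h3 : a' t.1 = 0 := by
        rw [← ha]
        simp only [hvanish t.1 hpos, Polynomial.coeff_zero]
      rw [h1, h2'] at h3
      simpa using h3
    · rw [if_neg h2]
      rfl
  have := sub_eq_zero.mp hsub
  exact this
end
end

section
/- Let (A,B,C,E) be the CCF of a minimal encoder G of an (n,k,δ) convolutional code C, and let (Â,B̂,Ĉ,Ê) be the CCF of a minimal encoder Ĝ of the dual code Ĉ, which has r̂ positive Forney indices. Then rank(C Ê^T B̂) = r̂. -/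
open Polynomial Matrix
open scoped Classical

noncomputable section

namespace ConvAux
open ConvCode
variable {F : Type} [Field F] [Fintype F]

lemma coeff_prod_of_le {ι : Type*} (s : Finset ι) (p : ι → F[X]) (d : ι → ℕ)
    (h : ∀ i ∈ s, (p i).natDegree ≤ d i) :
    (∏ i ∈ s, p i).coeff (∑ i ∈ s, d i) = ∏ i ∈ s, (p i).coeff (d i) := by
  classical
  induction s using Finset.cons_induction with
  | empty => simp
  | cons a s ha ih =>
    rw [Finset.prod_cons, Finset.sum_cons, Finset.prod_cons,
      Polynomial.coeff_mul_add_eq_of_natDegree_le (h a (Finset.mem_cons_self a s))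
        (le_trans ((Polynomial.natDegree_prod_le _ _)) (Finset.sum_le_sum fun i hi =>
          h i (Finset.mem_cons_of_mem hi))), ih fun i hi => h i (Finset.mem_cons_of_mem hi)]

lemma natDegree_det_le {m : ℕ} (M : Matrix (Fin m) (Fin m) F[X]) (d : Fin m → ℕ)
    (h : ∀ i j, (M i j).natDegree ≤ d i) :
    M.det.natDegree ≤ ∑ i, d i := by
  rw [Matrix.det_apply']
  refine le_trans (Polynomial.natDegree_sum_le _ _) ?_
  rw [Finset.fold_max_le]
  refine ⟨Nat.zero_le _, fun σ _ => ?_⟩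
  refine le_trans Polynomial.natDegree_mul_le ?_
  have h1 : (Polynomial.natDegree (Equiv.Perm.sign σ : F[X])) = 0 := by
    rcases Int.units_eq_one_or (Equiv.Perm.sign σ) with h | h <;> simp [h]
  rw [h1, zero_add]
  refine le_trans ((Polynomial.natDegree_prod_le _ _)) ?_
  calc ∑ i, (M (σ i) i).natDegree ≤ ∑ i, d (σ i) :=
        Finset.sum_le_sum fun i _ => h (σ i) i
    _ = ∑ i, d i := Equiv.sum_comp σ d

lemma coeff_det {m : ℕ} (M : Matrix (Fin m) (Fin m) F[X]) (d : Fin m → ℕ)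
    (h : ∀ i j, (M i j).natDegree ≤ d i) :
    M.det.coeff (∑ i, d i) = (Matrix.of fun i j => (M i j).coeff (d i)).det := by
  rw [Matrix.det_apply', Matrix.det_apply', Polynomial.finset_sum_coeff]
  refine Finset.sum_congr rfl fun σ _ => ?_
  have h1 : ∑ i, d i = 0 + ∑ i, d (σ i) := by rw [Equiv.sum_comp σ d, zero_add]
  rw [h1, Polynomial.coeff_mul_add_eq_of_natDegree_le (by
      rcases Int.units_eq_one_or (Equiv.Perm.sign σ) with h | h <;> simp [h])
      (le_trans ((Polynomial.natDegree_prod_le _ _)) (Finset.sum_le_sum fun i _ => h (σ i) i)),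
    coeff_prod_of_le _ _ _ (fun i _ => h (σ i) i)]
  congr 1
  rcases Int.units_eq_one_or (Equiv.Perm.sign σ) with h | h <;> simp [h]

/-- rows of G(0) are independent when G is basic. -/
lemma ccfE_rows_indep {k n : ℕ} {G : Matrix (Fin k) (Fin n) (Polynomial F)}
    (hG : IsBasic F G) (c : Fin k → F) (hc : c ᵥ* ccfE F G = 0) : c = 0 := by
  obtain ⟨H, hH⟩ := hG
  have hmap : (G.map (Polynomial.evalRingHom (0:F))) * (H.map (Polynomial.evalRingHom (0:F)))
      = 1 := by
    rw [← Matrix.map_mul, hH, Matrix.map_one _ (map_zero _) (map_one _)]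
  have hE : ccfE F G = G.map (Polynomial.evalRingHom (0:F)) := by
    ext i j
    simp [ccfE, Matrix.map_apply, Polynomial.coeff_zero_eq_eval_zero]
  calc c = c ᵥ* ((G.map (Polynomial.evalRingHom (0:F))) * (H.map (Polynomial.evalRingHom (0:F))))
        := by rw [hmap, Matrix.vecMul_one]
    _ = (c ᵥ* ccfE F G) ᵥ* (H.map (Polynomial.evalRingHom (0:F))) := by
        rw [← Matrix.vecMul_vecMul, hE]
    _ = 0 := by rw [hc, Matrix.zero_vecMul]

/-- the leading coefficient matrix. -/
def leadM {k n : ℕ} (G : Matrix (Fin k) (Fin n) (Polynomial F)) : Matrix (Fin k) (Fin n) F :=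
  Matrix.of fun i j => (G i j).coeff (rowDeg F G i)

lemma natDegree_le_rowDeg {k n : ℕ} (G : Matrix (Fin k) (Fin n) (Polynomial F)) (i : Fin k)
    (j : Fin n) : (G i j).natDegree ≤ rowDeg F G i :=
  Finset.le_sup (f := fun j => (G i j).natDegree) (Finset.mem_univ j)

/-- minimal encoders are row reduced. -/
lemma rowReduced {k n : ℕ} {G : Matrix (Fin k) (Fin n) (Polynomial F)}
    (hG : IsMinimalEncoder F G) (c : Fin k → F) (hc : c ᵥ* leadM G = 0) : c = 0 := by
  by_contra hcne
  by_cases hd : ∑ i, rowDeg F G i = 0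
  · have h0 : ∀ i, rowDeg F G i = 0 := fun i =>
      (Finset.sum_eq_zero_iff.mp hd) i (Finset.mem_univ i)
    have hEq : leadM G = ccfE F G := by
      ext i j; simp [leadM, ccfE, h0]
    exact hcne (ccfE_rows_indep hG.1 c (hEq ▸ hc))
  · have hpos : 0 < ∑ i, rowDeg F G i := Nat.pos_of_ne_zero hd
    have hlt : codeDeg F G < ∑ i, rowDeg F G i := by
      rw [codeDeg]
      rw [Finset.sup_lt_iff (show ⊥ < ∑ i, rowDeg F G i from hpos)]
      intro f _
      set M := G.submatrix id f with hM
      have hdb : ∀ i j, (M i j).natDegree ≤ rowDeg F G i := fun i j =>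
        natDegree_le_rowDeg G i (f j)
      have hle := natDegree_det_le M _ hdb
      have hco : M.det.coeff (∑ i, rowDeg F G i) = 0 := by
        rw [coeff_det M _ hdb]
        have h2 : (Matrix.of fun i j => (M i j).coeff (rowDeg F G i))
            = (leadM G).submatrix id f := rfl
        rw [h2]
        refine (Matrix.exists_vecMul_eq_zero_iff).mp ⟨c, hcne, ?_⟩
        funext j
        have h3 := congrFun hc (f j)
        simpa [Matrix.vecMul, dotProduct, Matrix.submatrix_apply] using h3
      rcases lt_or_eq_of_le hle with h | h
      · exact h
      · exfalso
        by_cases hdet : M.det = 0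
        · rw [hdet] at h; simp at h; exact hd h.symm
        · apply hdet
          rw [← Polynomial.leadingCoeff_eq_zero, Polynomial.leadingCoeff, h]
          exact hco
    have h4 := hG.2
    omega

/-- predictable-degree-type consequence of row-reducedness. -/
lemma pdp {kb n : ℕ} {Gh : Matrix (Fin kb) (Fin n) (Polynomial F)}
    (hGh : IsMinimalEncoder F Gh) (u : Fin kb → F[X])
    (h : ∀ j : Fin n, ∀ t : ℕ, 1 ≤ t → ((∑ i, u i * Gh i j).coeff t) = 0) :
    ∀ i, u i ≠ 0 → (u i).natDegree = 0 ∧ rowDeg F Gh i = 0 := by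
  classical
  set T := Finset.univ.filter (fun i => u i ≠ 0) with hT
  set d := T.sup (fun i => (u i).natDegree + rowDeg F Gh i) with hdd
  by_cases hd0 : d = 0
  · intro i hi
    have hmem : i ∈ T := by simp [hT, hi]
    have hle : (u i).natDegree + rowDeg F Gh i ≤ d :=
      Finset.le_sup (f := fun i => (u i).natDegree + rowDeg F Gh i) hmem
    omega
  · exfalso
    have hTne : T.Nonempty := by
      by_contra hTe
      rw [Finset.not_nonempty_iff_eq_empty] at hTe
      rw [hdd, hTe, Finset.sup_empty] at hd0
      exact hd0 rfl
    set c : Fin kb → F := fun i =>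
      if _ : rowDeg F Gh i ≤ d ∧ (u i).natDegree ≤ d - rowDeg F Gh i then
        (u i).coeff (d - rowDeg F Gh i) else 0 with hcdef
    have hkey : ∀ i j, c i * leadM Gh i j = (u i * Gh i j).coeff d := by
      intro i j
      by_cases hui : u i = 0
      · simp [hcdef, hui]
      · have hmem : i ∈ T := by simp [hT, hui]
        have hle : (u i).natDegree + rowDeg F Gh i ≤ d :=
          Finset.le_sup (f := fun i => (u i).natDegree + rowDeg F Gh i) hmem
        have h1 : rowDeg F Gh i ≤ d := by omega
        have h2 : (u i).natDegree ≤ d - rowDeg F Gh i := by omega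
        have h3 : d - rowDeg F Gh i + rowDeg F Gh i = d := by omega
        have h4 := Polynomial.coeff_mul_add_eq_of_natDegree_le h2 (natDegree_le_rowDeg Gh i j)
        rw [h3] at h4
        rw [hcdef]
        simp only [dif_pos (And.intro h1 h2)]
        rw [h4]
        rfl
    have hc0 : c ᵥ* leadM Gh = 0 := by
      funext j
      have : (c ᵥ* leadM Gh) j = ∑ i, c i * leadM Gh i j := by
        simp [Matrix.vecMul, dotProduct]
      rw [this]
      calc ∑ i, c i * leadM Gh i j = ∑ i, (u i * Gh i j).coeff d :=
            Finset.sum_congr rfl fun i _ => hkey i j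
        _ = (∑ i, u i * Gh i j).coeff d := (Polynomial.finset_sum_coeff _ _ _).symm
        _ = 0 := h j d (Nat.one_le_iff_ne_zero.mpr hd0)
    have hczero := rowReduced hGh c hc0
    obtain ⟨i0, hi0T, hi0⟩ := Finset.exists_mem_eq_sup T hTne
      (fun i => (u i).natDegree + rowDeg F Gh i)
    have hui0 : u i0 ≠ 0 := by simpa [hT] using hi0T
    have hd' : d = (u i0).natDegree + rowDeg F Gh i0 := hi0
    have h1 : rowDeg F Gh i0 ≤ d := by omega
    have h2 : (u i0).natDegree ≤ d - rowDeg F Gh i0 := by omega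
    have h3 : d - rowDeg F Gh i0 = (u i0).natDegree := by omega
    have : c i0 = 0 := congrFun hczero i0
    simp only [hcdef] at this
    rw [dif_pos (And.intro h1 h2), h3] at this
    exact hui0 (Polynomial.leadingCoeff_eq_zero.mp this)

end ConvAux
open ConvAux

/-- Proposition 4.5(b): `rank (C Êᵀ B̂) = r̂`. -/
theorem statement10 {F : Type} [Field F] [Fintype F]
    (k kb n : ℕ) (hkn : k + kb = n)
    (G : Matrix (Fin k) (Fin n) (Polynomial F)) (hG : ConvCode.IsMinimalEncoder F G)
    (Gh : Matrix (Fin kb) (Fin n) (Polynomial F)) (hGh : ConvCode.IsMinimalEncoder F Gh)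
    (hdual : ConvCode.code F Gh = ConvCode.dualCode F (ConvCode.code F G)) :
    (ConvCode.matC F G * (ConvCode.matE F Gh)ᵀ * ConvCode.matB F Gh).rank =
      (Finset.univ.filter fun i => 0 < ConvCode.rowDeg F Gh i).card := by
  classical
  set M := ConvCode.matC F G * (ConvCode.matE F Gh)ᵀ * ConvCode.matB F Gh with hM
  have hMapp : ∀ (s : ConvCode.States F G) (t : ConvCode.States F Gh),
      M s t = if (t.2 : ℕ) = 0 then
        ∑ j, ConvCode.matC F G s j * ConvCode.matE F Gh t.1 j else 0 := by
    intro s t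
    rw [hM]
    rw [Matrix.mul_apply]
    have h1 : ∀ l : Fin kb,
        (ConvCode.matC F G * (ConvCode.matE F Gh)ᵀ) s l * ConvCode.matB F Gh l t
        = if t.1 = l ∧ (t.2 : ℕ) = 0 then
            ∑ j, ConvCode.matC F G s j * ConvCode.matE F Gh l j else 0 := by
      intro l
      rw [Matrix.mul_apply]
      simp only [ConvCode.matB, ConvCode.ccfB, Matrix.of_apply, mul_ite, mul_one, mul_zero,
        Matrix.transpose_apply]
    rw [Finset.sum_congr rfl fun l _ => h1 l]
    by_cases h0 : (t.2 : ℕ) = 0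
    · simp [h0]
    · simp [h0]
  -- the family of (potentially) nonzero columns
  set v : {i : Fin kb // 0 < ConvCode.rowDeg F Gh i} → (ConvCode.States F G → F) :=
    fun i => Mᵀ ⟨i.1, ⟨0, i.2⟩⟩ with hv
  -- linear independence of the family v
  have hli : LinearIndependent F v := by
    rw [Fintype.linearIndependent_iff]
    intro c hsum
    set w : Fin n → F := fun j =>
      ∑ i : {i : Fin kb // 0 < ConvCode.rowDeg F Gh i},
        c i * ConvCode.ccfE F Gh i.1 j with hw
    -- Step A
    have hA : ∀ s : ConvCode.States F G, ∑ j, ConvCode.matC F G s j * w j = 0 := by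
      intro s
      have h2 := congrFun hsum s
      simp only [Finset.sum_apply, Pi.smul_apply, smul_eq_mul, Pi.zero_apply] at h2
      have h3 : ∀ i : {i : Fin kb // 0 < ConvCode.rowDeg F Gh i},
          c i * v i s = c i * ∑ j, ConvCode.matC F G s j * ConvCode.matE F Gh i.1 j := by
        intro i
        rw [hv]
        simp only [Matrix.transpose_apply]
        rw [hMapp s ⟨i.1, ⟨0, i.2⟩⟩]
        simp
      rw [Finset.sum_congr rfl fun i _ => h3 i] at h2
      calc ∑ j, ConvCode.matC F G s j * w j
          = ∑ j, ∑ i : {i : Fin kb // 0 < ConvCode.rowDeg F Gh i},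
              c i * (ConvCode.matC F G s j * ConvCode.ccfE F Gh i.1 j) := by
            refine Finset.sum_congr rfl fun j _ => ?_
            rw [hw, Finset.mul_sum]
            refine Finset.sum_congr rfl fun i _ => ?_
            ring
        _ = ∑ i : {i : Fin kb // 0 < ConvCode.rowDeg F Gh i},
              c i * ∑ j, ConvCode.matC F G s j * ConvCode.matE F Gh i.1 j := by
            rw [Finset.sum_comm]
            refine Finset.sum_congr rfl fun i _ => ?_
            rw [Finset.mul_sum]
            rfl
        _ = 0 := h2
    -- Step B : orthogonality of the rows of Gh and G
    have hB : ∀ (ih : Fin kb) (i : Fin k), ∑ j, Gh ih j * G i j = 0 := by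
      intro ih i
      have hrowGh : (fun j => Gh ih j) ∈ ConvCode.code F Gh := by
        refine ⟨fun l => if l = ih then 1 else 0, ?_⟩
        funext j
        simp [Matrix.vecMul, dotProduct, ite_mul]
      rw [hdual] at hrowGh
      have hrowG : (fun j => G i j) ∈ ConvCode.code F G := by
        refine ⟨fun l => if l = i then 1 else 0, ?_⟩
        funext j
        simp [Matrix.vecMul, dotProduct, ite_mul]
      exact hrowGh _ hrowG
    -- Step C : the constant vector w lies in the code generated by Gh
    have hC : (fun j => Polynomial.C (w j)) ∈ ConvCode.code F Gh := by
      rw [hdual]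
      intro vv hvv
      obtain ⟨u, rfl⟩ := hvv
      have hp : ∀ i : Fin k, ∑ j, G i j * Polynomial.C (w j) = 0 := by
        intro i
        ext t
        rw [Polynomial.finset_sum_coeff]
        simp only [Polynomial.coeff_mul_C, Polynomial.coeff_zero]
        rcases Nat.eq_zero_or_pos t with ht | ht
        · subst ht
          calc ∑ j, (G i j).coeff 0 * w j
              = ∑ j, ∑ i' : {i : Fin kb // 0 < ConvCode.rowDeg F Gh i},
                  c i' * ((Gh i'.1 j).coeff 0 * (G i j).coeff 0) := by
                refine Finset.sum_congr rfl fun j _ => ?_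
                rw [hw, Finset.mul_sum]
                refine Finset.sum_congr rfl fun i' _ => ?_
                simp only [ConvCode.ccfE, Matrix.of_apply]
                ring
            _ = ∑ i' : {i : Fin kb // 0 < ConvCode.rowDeg F Gh i},
                  c i' * ∑ j, (Gh i'.1 j).coeff 0 * (G i j).coeff 0 := by
                rw [Finset.sum_comm]
                exact Finset.sum_congr rfl fun i' _ => (Finset.mul_sum _ _ _).symm
            _ = 0 := by
                refine Finset.sum_eq_zero fun i' _ => ?_
                have h4 : ∑ j, (Gh i'.1 j).coeff 0 * (G i j).coeff 0
                    = (∑ j, Gh i'.1 j * G i j).coeff 0 := by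
                  rw [Polynomial.finset_sum_coeff]
                  exact Finset.sum_congr rfl fun j _ =>
                    (Polynomial.mul_coeff_zero _ _).symm
                rw [h4, hB i'.1 i, Polynomial.coeff_zero, mul_zero]
        · by_cases hle : t ≤ ConvCode.rowDeg F G i
          · have hs := hA ⟨i, ⟨t - 1, by omega⟩⟩
            have h5 : ∀ j, ConvCode.matC F G ⟨i, ⟨t - 1, by omega⟩⟩ j
                = (G i j).coeff t := by
              intro j
              simp only [ConvCode.matC, ConvCode.ccfC, Matrix.of_apply]
              congr 1
              omega
            rw [Finset.sum_congr rfl fun j _ => by rw [h5 j]] at hs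
            exact hs
          · refine Finset.sum_eq_zero fun j _ => ?_
            rw [Polynomial.coeff_eq_zero_of_natDegree_lt, zero_mul]
            exact lt_of_le_of_lt (natDegree_le_rowDeg G i j) (by omega)
      have h6 : (fun j => Polynomial.C (w j)) ⬝ᵥ (u ᵥ* G) = 0 := by
        simp only [dotProduct, Matrix.vecMul, Finset.mul_sum]
        rw [Finset.sum_comm]
        calc ∑ i, ∑ j, Polynomial.C (w j) * (u i * G i j)
            = ∑ i, u i * ∑ j, G i j * Polynomial.C (w j) := by
              refine Finset.sum_congr rfl fun i _ => ?_
              rw [Finset.mul_sum]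
              refine Finset.sum_congr rfl fun j _ => ?_
              ring
          _ = 0 := by
              refine Finset.sum_eq_zero fun i _ => ?_
              rw [hp i, mul_zero]
      exact h6
    -- Step D : apply the predictable degree property
    obtain ⟨uh, huh⟩ := hC
    have hcoef : ∀ (j : Fin n) (t : ℕ), 1 ≤ t → (∑ i, uh i * Gh i j).coeff t = 0 := by
      intro j t ht
      have h7 : ∑ i, uh i * Gh i j = Polynomial.C (w j) := by
        have := congrFun huh j
        simpa [Matrix.vecMul, dotProduct] using this
      rw [h7, Polynomial.coeff_C]
      simp
      omega
    have hpd := pdp hGh uh hcoef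
    -- Step E : compare the two representations of w
    set b : Fin kb → F := fun i =>
      (if h : 0 < ConvCode.rowDeg F Gh i then c ⟨i, h⟩ else 0) - (uh i).coeff 0 with hb
    have hw2 : ∀ j, ∑ i, (uh i).coeff 0 * ConvCode.ccfE F Gh i j = w j := by
      intro j
      have := congrFun huh j
      have h8 : Polynomial.C (w j) = ∑ i, uh i * Gh i j := by
        rw [← this]; simp [Matrix.vecMul, dotProduct]
      have h9 := congrArg (fun p => Polynomial.coeff p 0) h8
      simp only [Polynomial.coeff_C_zero, Polynomial.finset_sum_coeff,
        Polynomial.mul_coeff_zero] at h9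
      rw [h9]
      rfl
    have hw1 : ∀ j, ∑ i, (if h : 0 < ConvCode.rowDeg F Gh i then c ⟨i, h⟩ else 0)
        * ConvCode.ccfE F Gh i j = w j := by
      intro j
      rw [← Fintype.sum_subtype_add_sum_subtype (fun i => 0 < ConvCode.rowDeg F Gh i)
        (fun i => (if h : 0 < ConvCode.rowDeg F Gh i then c ⟨i, h⟩ else 0)
          * ConvCode.ccfE F Gh i j)]
      have e1 : ∑ i : {x : Fin kb // 0 < ConvCode.rowDeg F Gh x},
          (if h : 0 < ConvCode.rowDeg F Gh i.1 then c ⟨i.1, h⟩ else 0)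
            * ConvCode.ccfE F Gh i.1 j = w j := by
        refine Finset.sum_congr rfl fun i _ => ?_
        rw [dif_pos i.2]
      have e2 : ∑ i : {x : Fin kb // ¬ 0 < ConvCode.rowDeg F Gh x},
          (if h : 0 < ConvCode.rowDeg F Gh i.1 then c ⟨i.1, h⟩ else 0)
            * ConvCode.ccfE F Gh i.1 j = 0 := by
        refine Finset.sum_eq_zero fun i _ => ?_
        rw [dif_neg i.2, zero_mul]
      rw [e1, e2, add_zero]
    have hbz : b ᵥ* ConvCode.ccfE F Gh = 0 := by
      funext j
      show _ = (0 : F)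
      have : (b ᵥ* ConvCode.ccfE F Gh) j = ∑ i, b i * ConvCode.ccfE F Gh i j := by
        simp [Matrix.vecMul, dotProduct]
      rw [this]
      simp only [hb, sub_mul, Finset.sum_sub_distrib]
      rw [hw1 j, hw2 j, sub_self]
    have hbz2 : b = 0 := ccfE_rows_indep hGh.1 b hbz
    intro i
    have huh0 : uh i.1 = 0 := by
      by_contra hne
      have := (hpd i.1 hne).2
      omega
    have := congrFun hbz2 i.1
    rw [hb] at this
    simp only [dif_pos i.2, huh0, Polynomial.coeff_zero, sub_zero, Pi.zero_apply] at this
    exact this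
  -- now compute the rank
  have hspan : Submodule.span F (Set.range Mᵀ) = Submodule.span F (Set.range v) := by
    apply le_antisymm
    · rw [Submodule.span_le]
      rintro x ⟨t, rfl⟩
      by_cases h0 : (t.2 : ℕ) = 0
      · have hpos : 0 < ConvCode.rowDeg F Gh t.1 := lt_of_le_of_lt (Nat.zero_le _) t.2.isLt
        have ht : (⟨t.1, ⟨0, hpos⟩⟩ : ConvCode.States F Gh) = t := by
          obtain ⟨t1, t2⟩ := t
          simp only
          congr 1
          exact Fin.ext h0.symm
        have : Mᵀ t = v ⟨t.1, hpos⟩ := by rw [hv]; simp only [ht]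
        rw [this]
        exact Submodule.subset_span ⟨_, rfl⟩
      · have : Mᵀ t = 0 := by
          funext s
          simp only [Matrix.transpose_apply, Pi.zero_apply]
          rw [hMapp s t, if_neg h0]
        rw [this]
        exact Submodule.zero_mem _
    · rw [Submodule.span_le]
      rintro x ⟨i, rfl⟩
      exact Submodule.subset_span ⟨_, rfl⟩
  rw [Matrix.rank_eq_finrank_span_cols, show Set.range M.col = Set.range Mᵀ from rfl, hspan, finrank_span_eq_card hli,
    Fintype.card_subtype]
end
end

section
/- Let (A,B,C,E) be the CCF of a minimal encoder G of an (n,k,δ) convolutional code C, let (Â,B̂,Ĉ,Ê) be the CCF of a minimal encoder Ĝ of the dual code Ĉ, and set Δ = {(X,Y) ∈ F^δ × F^δ : Y = XA + uB for some u ∈ F^k}, C_const = C ∩ F^n, and Ω = {(X,Y) ∈ Δ : XC + Y B^T E ∈ C_const}. Then ker(C Ê^T B̂) = Π₁(Ω) = {X ∈ F^δ : there exists u ∈ F^k with (X, XA + uB) ∈ Ω}, where Π₁(X,Y) = X. -/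
open Polynomial Matrix
open scoped Classical

set_option linter.unusedSectionVars false
noncomputable section

namespace ConvCode

variable (F : Type) [Field F] [Fintype F]

section Helpers

lemma vecMul_single_row {a n : ℕ} (M : Matrix (Fin a) (Fin n) (Polynomial F)) (i : Fin a) :
    (Pi.single i (1 : Polynomial F)) ᵥ* M = fun j => M i j := by
  funext j
  simp [Matrix.vecMul, dotProduct, Pi.single_apply, ite_mul, Finset.sum_ite_eq]

lemma row_mem_code {a n : ℕ} (M : Matrix (Fin a) (Fin n) (Polynomial F)) (i : Fin a) :
    (fun j => M i j) ∈ code F M :=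
  ⟨Pi.single i 1, vecMul_single_row F M i⟩

lemma rows_orth {k kb n : ℕ} {G : Matrix (Fin k) (Fin n) (Polynomial F)}
    {Gh : Matrix (Fin kb) (Fin n) (Polynomial F)}
    (hdual : code F Gh = dualCode F (code F G)) (i : Fin k) (ih : Fin kb) :
    ∑ j, G i j * Gh ih j = 0 := by
  have h1 : (fun j => Gh ih j) ∈ dualCode F (code F G) := hdual ▸ row_mem_code F Gh ih
  have h2 := h1 _ (row_mem_code F G i)
  simpa [dotProduct, mul_comm] using h2

lemma EEh_entry {k kb n : ℕ} {G : Matrix (Fin k) (Fin n) (Polynomial F)}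
    {Gh : Matrix (Fin kb) (Fin n) (Polynomial F)}
    (hdual : code F Gh = dualCode F (code F G)) (i : Fin k) (ih : Fin kb) :
    ∑ j, (G i j).coeff 0 * (Gh ih j).coeff 0 = 0 := by
  have h := rows_orth F hdual i ih
  calc ∑ j, (G i j).coeff 0 * (Gh ih j).coeff 0
      = (∑ j, G i j * Gh ih j).coeff 0 := by
        rw [Polynomial.finset_sum_coeff]
        exact Finset.sum_congr rfl fun j _ => (Polynomial.mul_coeff_zero _ _).symm
    _ = 0 := by rw [h]; simp

lemma CEh_entry {k kb n : ℕ} {G : Matrix (Fin k) (Fin n) (Polynomial F)}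
    {Gh : Matrix (Fin kb) (Fin n) (Polynomial F)}
    (hdual : code F Gh = dualCode F (code F G)) (i : Fin k) (ih : Fin kb) (m : ℕ)
    (h0 : rowDeg F Gh ih = 0) :
    ∑ j, (G i j).coeff m * (Gh ih j).coeff 0 = 0 := by
  have hc : ∀ j, Gh ih j = Polynomial.C ((Gh ih j).coeff 0) := by
    intro j
    have h1 : (Gh ih j).natDegree ≤ rowDeg F Gh ih :=
      Finset.le_sup (f := fun j => (Gh ih j).natDegree) (Finset.mem_univ j)
    exact Polynomial.eq_C_of_natDegree_le_zero (h0 ▸ h1)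
  have h := rows_orth F hdual i ih
  calc ∑ j, (G i j).coeff m * (Gh ih j).coeff 0
      = (∑ j, G i j * Gh ih j).coeff m := by
        rw [Polynomial.finset_sum_coeff]
        refine Finset.sum_congr rfl fun j _ => ?_
        conv_rhs => rw [hc j]
        rw [Polynomial.coeff_mul_C]
    _ = 0 := by rw [h]; simp

lemma matE_rinv {a b : ℕ} {M : Matrix (Fin a) (Fin b) (Polynomial F)} (h : IsBasic F M) :
    ∃ N : Matrix (Fin b) (Fin a) F, matE F M * N = 1 := by
  obtain ⟨H, hH⟩ := h
  refine ⟨Matrix.of fun j i => (H j i).coeff 0, ?_⟩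
  ext i i'
  have h2 : ((M * H) i i').coeff 0 = ((1 : Matrix (Fin a) (Fin a) (Polynomial F)) i i').coeff 0 :=
    by rw [hH]
  rw [Matrix.mul_apply, Polynomial.finset_sum_coeff] at h2
  simp only [Matrix.one_apply, apply_ite (fun p => Polynomial.coeff p 0), Polynomial.coeff_one_zero,
    Polynomial.coeff_zero] at h2
  rw [Matrix.mul_apply]
  simp only [matE, ccfE, Matrix.of_apply, Matrix.one_apply]
  rw [← h2]
  exact Finset.sum_congr rfl fun j _ => (Polynomial.mul_coeff_zero _ _).symm

lemma mem_rowspace {k kb n : ℕ} (hkn : k + kb = n)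
    (E : Matrix (Fin k) (Fin n) F) (Eh : Matrix (Fin kb) (Fin n) F)
    (H : Matrix (Fin n) (Fin k) F) (Hh : Matrix (Fin n) (Fin kb) F)
    (hE : E * H = 1) (hEh : Eh * Hh = 1) (hperp : E * Ehᵀ = 0)
    (w : Fin n → F) (hw : w ᵥ* Ehᵀ = 0) : ∃ v : Fin k → F, w = v ᵥ* E := by
  set f := (Ehᵀ).vecMulLinear with hf
  set g := E.vecMulLinear with hg
  have hle : LinearMap.range g ≤ LinearMap.ker f := by
    rintro x ⟨v, rfl⟩
    simp only [LinearMap.mem_ker, hf, hg, Matrix.vecMulLinear_apply]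
    rw [Matrix.vecMul_vecMul, hperp, Matrix.vecMul_zero]
  have hginj : Function.Injective g := by
    intro a b hab
    have h1 : a ᵥ* E = b ᵥ* E := hab
    have h2 := congrArg (fun x => x ᵥ* H) h1
    simpa [Matrix.vecMul_vecMul, hE, Matrix.vecMul_one] using h2
  have hfsurj : Function.Surjective f := by
    intro y
    refine ⟨y ᵥ* Hhᵀ, ?_⟩
    show (y ᵥ* Hhᵀ) ᵥ* Ehᵀ = y
    rw [Matrix.vecMul_vecMul, ← Matrix.transpose_mul, hEh, Matrix.transpose_one,
      Matrix.vecMul_one]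
  have h1 : Module.finrank F (LinearMap.range g) = k := by
    rw [LinearMap.finrank_range_of_inj hginj, Module.finrank_fin_fun]
  have h2 : Module.finrank F (LinearMap.ker f) = k := by
    have h3 := LinearMap.finrank_range_add_finrank_ker f
    rw [LinearMap.range_eq_top.mpr hfsurj] at h3
    rw [finrank_top, Module.finrank_fin_fun, Module.finrank_fin_fun] at h3
    omega
  have heq : LinearMap.range g = LinearMap.ker f :=
    Submodule.eq_of_le_of_finrank_eq hle (by rw [h1, h2])
  have hwmem : w ∈ LinearMap.ker f := by
    simp only [LinearMap.mem_ker, hf, Matrix.vecMulLinear_apply]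
    exact hw
  rw [← heq] at hwmem
  obtain ⟨v, hv⟩ := hwmem
  exact ⟨v, hv.symm⟩

variable {κ : ℕ} {d : Fin κ → ℕ}

lemma vecMul_ccfB_apply (u : Fin κ → F) (t : StateIdx κ d) :
    (u ᵥ* ccfB F d) t = if (t.2 : ℕ) = 0 then u t.1 else 0 := by
  simp only [Matrix.vecMul, dotProduct, ccfB, Matrix.of_apply]
  have h : ∀ i, u i * (if t.1 = i ∧ (t.2 : ℕ) = 0 then (1 : F) else 0)
      = if t.1 = i then (if (t.2 : ℕ) = 0 then u i else 0) else 0 := by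
    intro i
    by_cases h1 : t.1 = i <;> by_cases h2 : (t.2 : ℕ) = 0 <;> simp [h1, h2]
  simp_rw [h]
  rw [Finset.sum_ite_eq]
  simp

lemma vecMul_ccfBt_pos (Y : StateIdx κ d → F) (i : Fin κ) (h : 0 < d i) :
    (Y ᵥ* (ccfB F d)ᵀ) i = Y ⟨i, ⟨0, h⟩⟩ := by
  simp only [Matrix.vecMul, dotProduct, Matrix.transpose_apply, ccfB, Matrix.of_apply]
  rw [Finset.sum_eq_single (⟨i, ⟨0, h⟩⟩ : StateIdx κ d)]
  · simp
  · intro t _ hne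
    rcases t with ⟨ti, tv⟩
    by_cases h1 : ti = i
    · subst h1
      by_cases h2 : (tv : ℕ) = 0
      · exact absurd (by rw [show tv = ⟨0, h⟩ from Fin.ext h2]) hne
      · simp [h2]
    · simp [h1]
  · simp

lemma vecMul_ccfBt_zero (Y : StateIdx κ d → F) (i : Fin κ) (h : d i = 0) :
    (Y ᵥ* (ccfB F d)ᵀ) i = 0 := by
  simp only [Matrix.vecMul, dotProduct, Matrix.transpose_apply, ccfB, Matrix.of_apply]
  apply Finset.sum_eq_zero
  rintro ⟨ti, tv⟩ _
  by_cases h1 : ti = i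
  · have h2 : d ti = 0 := by rw [h1, h]
    exact absurd h2 (by have h3 := tv.isLt; omega)
  · simp [h1]

lemma vecMulA_at_zero (X : StateIdx κ d → F) (i : Fin κ) (h : 0 < d i) :
    (X ᵥ* ccfA F d) ⟨i, ⟨0, h⟩⟩ = 0 := by
  simp only [Matrix.vecMul, dotProduct, ccfA, Matrix.of_apply]
  apply Finset.sum_eq_zero
  intro s _
  simp

lemma YBt_eq (X : StateIdx κ d → F) (u : Fin κ → F) (i : Fin κ) :
    ((X ᵥ* ccfA F d + u ᵥ* ccfB F d) ᵥ* (ccfB F d)ᵀ) i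
      = if 0 < d i then u i else 0 := by
  by_cases h : 0 < d i
  · rw [if_pos h, vecMul_ccfBt_pos F _ i h, Pi.add_apply, vecMulA_at_zero F X i h,
      vecMul_ccfB_apply]
    simp
  · rw [if_neg h, vecMul_ccfBt_zero F _ i (by omega)]

lemma constE_mem {k n : ℕ} (G : Matrix (Fin k) (Fin n) (Polynomial F)) (u₀ : Fin k → F)
    (hu : ∀ i, 0 < rowDeg F G i → u₀ i = 0) :
    (u₀ ᵥ* matE F G) ∈ constSet F G := by
  show (fun j => Polynomial.C ((u₀ ᵥ* matE F G) j)) ∈ code F G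
  refine ⟨fun i => Polynomial.C (u₀ i), ?_⟩
  funext j
  show ∑ i, Polynomial.C (u₀ i) * G i j
      = Polynomial.C (∑ i, u₀ i * ((matE F G)ᵀ j i))
  rw [map_sum]
  refine Finset.sum_congr rfl fun i _ => ?_
  simp only [matE, ccfE, Matrix.transpose_apply, Matrix.of_apply]
  by_cases h : 0 < rowDeg F G i
  · simp [hu i h]
  · have h0 : rowDeg F G i = 0 := by omega
    have h1 : (G i j).natDegree ≤ rowDeg F G i :=
      Finset.le_sup (f := fun j => (G i j).natDegree) (Finset.mem_univ j)
    have h2 : G i j = Polynomial.C ((G i j).coeff 0) :=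
      Polynomial.eq_C_of_natDegree_le_zero (le_trans h1 (le_of_eq h0))
    conv_lhs => rw [h2]
    rw [← Polynomial.C_mul]

lemma const_orth {k kb n : ℕ} {G : Matrix (Fin k) (Fin n) (Polynomial F)}
    {Gh : Matrix (Fin kb) (Fin n) (Polynomial F)}
    (hdual : code F Gh = dualCode F (code F G))
    {w : Fin n → F} (hw : w ∈ constSet F G) (ih : Fin kb) :
    ∑ j, w j * (Gh ih j).coeff 0 = 0 := by
  have h1 : (fun j => Gh ih j) ∈ dualCode F (code F G) := hdual ▸ row_mem_code F Gh ih
  have h2 := h1 _ hw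
  have h3 := congrArg (fun p => Polynomial.coeff p 0) h2
  simpa [dotProduct, Polynomial.finset_sum_coeff, Polynomial.coeff_mul_C, mul_comm] using h3

end Helpers

end ConvCode

/-- Proposition 4.5(c): `ker (C Êᵀ B̂) = Π₁(Ω) = {X : ∃ u, (X, XA+uB) ∈ Ω}`. -/
theorem statement11 {F : Type} [Field F] [Fintype F]
    (k kb n : ℕ) (hkn : k + kb = n)
    (G : Matrix (Fin k) (Fin n) (Polynomial F)) (hG : ConvCode.IsMinimalEncoder F G)
    (Gh : Matrix (Fin kb) (Fin n) (Polynomial F)) (hGh : ConvCode.IsMinimalEncoder F Gh)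
    (hdual : ConvCode.code F Gh = ConvCode.dualCode F (ConvCode.code F G)) :
    {X : ConvCode.States F G → F |
        X ᵥ* (ConvCode.matC F G * (ConvCode.matE F Gh)ᵀ * ConvCode.matB F Gh) = 0} =
      Prod.fst '' ConvCode.Omega F G ∧
    Prod.fst '' ConvCode.Omega F G =
      {X : ConvCode.States F G → F | ∃ u : Fin k → F,
        (X, X ᵥ* ConvCode.matA F G + u ᵥ* ConvCode.matB F G) ∈ ConvCode.Omega F G} := by
  classical
  have hEEh : ConvCode.matE F G * (ConvCode.matE F Gh)ᵀ = 0 := by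
    ext i ih
    simp only [Matrix.mul_apply, Matrix.transpose_apply, ConvCode.matE, ConvCode.ccfE,
      Matrix.of_apply, Matrix.zero_apply]
    exact ConvCode.EEh_entry F hdual i ih
  have hCEh : ∀ (s : ConvCode.States F G) (ih : Fin kb), ConvCode.rowDeg F Gh ih = 0 →
      (ConvCode.matC F G * (ConvCode.matE F Gh)ᵀ) s ih = 0 := by
    intro s ih h
    simp only [Matrix.mul_apply, Matrix.transpose_apply, ConvCode.matC, ConvCode.ccfC,
      ConvCode.matE, ConvCode.ccfE, Matrix.of_apply]
    exact ConvCode.CEh_entry F hdual s.1 ih _ h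
  obtain ⟨H0, hH0⟩ := ConvCode.matE_rinv F hG.1
  obtain ⟨Hh0, hHh0⟩ := ConvCode.matE_rinv F hGh.1
  have hBapp : ∀ (z : Fin kb → F) (t : ConvCode.States F Gh),
      (z ᵥ* ConvCode.matB F Gh) t = if (t.2 : ℕ) = 0 then z t.1 else 0 :=
    fun z t => ConvCode.vecMul_ccfB_apply F z t
  constructor
  · ext X
    simp only [Set.mem_setOf_eq, Set.mem_image]
    constructor
    · intro hX
      have hz : (X ᵥ* ConvCode.matC F G) ᵥ* (ConvCode.matE F Gh)ᵀ = 0 := by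
        funext ih
        by_cases h : 0 < ConvCode.rowDeg F Gh ih
        · have h1 := congrFun hX (⟨ih, ⟨0, h⟩⟩ : ConvCode.States F Gh)
          rw [← Matrix.vecMul_vecMul, hBapp] at h1
          simp only [Matrix.vecMul_vecMul] at h1 ⊢
          simpa using h1
        · have h0 : ConvCode.rowDeg F Gh ih = 0 := by omega
          rw [Matrix.vecMul_vecMul]
          show ∑ s, X s * (ConvCode.matC F G * (ConvCode.matE F Gh)ᵀ) s ih = 0
          refine Finset.sum_eq_zero fun s _ => ?_
          rw [hCEh s ih h0, mul_zero]
      obtain ⟨v, hv⟩ := ConvCode.mem_rowspace F hkn (ConvCode.matE F G) (ConvCode.matE F Gh)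
        H0 Hh0 hH0 hHh0 hEEh (X ᵥ* ConvCode.matC F G) hz
      refine ⟨(X, X ᵥ* ConvCode.matA F G + (-v) ᵥ* ConvCode.matB F G), ⟨⟨-v, rfl⟩, ?_⟩, rfl⟩
      show X ᵥ* ConvCode.matC F G +
        ((X ᵥ* ConvCode.matA F G + (-v) ᵥ* ConvCode.matB F G) ᵥ* (ConvCode.matB F G)ᵀ) ᵥ*
          ConvCode.matE F G ∈ ConvCode.constSet F G
      have h4 : ((X ᵥ* ConvCode.matA F G + (-v) ᵥ* ConvCode.matB F G) ᵥ*
          (ConvCode.matB F G)ᵀ) = fun i => if 0 < ConvCode.rowDeg F G i then (-v) i else 0 := by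
        funext i
        exact ConvCode.YBt_eq F X (-v) i
      rw [h4, hv, ← Matrix.add_vecMul]
      have h5 : (v + fun i => if 0 < ConvCode.rowDeg F G i then (-v) i else 0)
          = fun i => if 0 < ConvCode.rowDeg F G i then 0 else v i := by
        funext i
        by_cases h : 0 < ConvCode.rowDeg F G i <;> simp [h]
      rw [h5]
      exact ConvCode.constE_mem F G _ (fun i h => by simp [h])
    · rintro ⟨⟨X', Y⟩, ⟨⟨u, hY⟩, hconst⟩, rfl⟩
      have hwEh : (X' ᵥ* ConvCode.matC F G + (Y ᵥ* (ConvCode.matB F G)ᵀ) ᵥ*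
          ConvCode.matE F G) ᵥ* (ConvCode.matE F Gh)ᵀ = 0 := by
        funext ih
        have h6 := ConvCode.const_orth F hdual hconst ih
        simp only [Matrix.vecMul, dotProduct, Matrix.transpose_apply, ConvCode.matE,
          ConvCode.ccfE, Matrix.of_apply, Pi.zero_apply]
        exact h6
      have hb0 : ((Y ᵥ* (ConvCode.matB F G)ᵀ) ᵥ* ConvCode.matE F G) ᵥ*
          (ConvCode.matE F Gh)ᵀ = 0 := by
        rw [Matrix.vecMul_vecMul, hEEh, Matrix.vecMul_zero]
      rw [Matrix.add_vecMul, hb0, add_zero] at hwEh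
      show X' ᵥ* (ConvCode.matC F G * (ConvCode.matE F Gh)ᵀ * ConvCode.matB F Gh) = 0
      rw [← Matrix.vecMul_vecMul, ← Matrix.vecMul_vecMul, hwEh, Matrix.zero_vecMul]
  · ext X
    simp only [Set.mem_image, Set.mem_setOf_eq]
    constructor
    · rintro ⟨⟨X', Y⟩, hΩ, rfl⟩
      obtain ⟨⟨u, hY⟩, hconst⟩ := hΩ
      exact ⟨u, by rw [← hY]; exact ⟨⟨u, hY⟩, hconst⟩⟩
    · rintro ⟨u, hu⟩
      exact ⟨_, hu, rfl⟩
end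
end
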